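/- arXiv:2007.01175 — 5 statements merged into one kernel-verified Lean document; each statement's English description precedes it below -/
import Mathlib

section
/- (Euler's formula for Stirling operators.) For a finite set X, n ≥ 1, 1 ≤ k ≤ n, a symmetric function f : X^n → ℝ, and points x₁,…,x_k ∈ X, it holds that (S(n,k)f)(x₁,…,x_k) = ((−1)^k/k!) Σ_{η ⊆ [x₁,…,x_k]} (−1)^{|η|} ⟨η^{⊗n}, f⟩, where the sum is over all sub-multisets η of the multiset [x₁,…,x_k], |η| is the cardinality of η, and η is identified with the sum of Dirac measures at its elements. -/
open Finset

section Defs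

variable {X : Type*} [Fintype X] [DecidableEq X]

/-- The falling factorial measure `(ω)_n` on `X^n`, given by the density
`(ω)_n(y₁,…,y_n) = ω(y₁)(ω(y₂)−δ_{y₁}(y₂))⋯(ω(y_n)−δ_{y₁}(y_n)−⋯−δ_{y_{n−1}}(y_n))`. -/
noncomputable def ff (ω : X → ℝ) : (n : ℕ) → (Fin n → X) → ℝ
  | 0 => fun _ => 1
  | n + 1 => fun y =>
      ff ω n (fun i => y i.castSucc) *
        (ω (y (Fin.last n)) - ∑ i : Fin n, if y i.castSucc = y (Fin.last n) then (1 : ℝ) else 0)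

/-- Dirac measure at `x`. -/
noncomputable def diracMeas (x : X) : X → ℝ := fun a => if a = x then 1 else 0

/-- The measure `δ_{x₁}+⋯+δ_{x_k}` of a multiset `[x₁,…,x_k]`. -/
noncomputable def msMeas {k : ℕ} (x : Fin k → X) : X → ℝ :=
  fun a => ((Finset.univ.filter (fun i => x i = a)).card : ℝ)

/-- Integration `⟨μ, f⟩` of a function against a measure on `X^n`. -/
noncomputable def pairing (n : ℕ) (μ f : (Fin n → X) → ℝ) : ℝ :=
  ∑ y : Fin n → X, μ y * f y

/-- Symmetrization of a function/measure on `X^n`. -/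
noncomputable def symmFun (n : ℕ) (μ : (Fin n → X) → ℝ) : (Fin n → X) → ℝ :=
  fun y => (∑ π : Equiv.Perm (Fin n), μ (y ∘ π)) / n.factorial

/-- Tensor product of measures/functions on `X^k` and `X^m`. -/
noncomputable def tensFun {k m : ℕ} (μ : (Fin k → X) → ℝ) (ν : (Fin m → X) → ℝ) :
    (Fin (k + m) → X) → ℝ :=
  fun y => μ (fun i => y (Fin.castAdd m i)) * ν (fun j => y (Fin.natAdd k j))

/-- Re-indexing along an equality of dimensions. -/
def castFun {m n : ℕ} (h : m = n) (μ : (Fin m → X) → ℝ) : (Fin n → X) → ℝ :=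
  fun y => μ (fun i => y (Fin.cast h i))

/-- The product measure `ω^{⊗n}` (and likewise the tensor power `ξ^{⊗n}` of a function). -/
noncomputable def prodMeas (ω : X → ℝ) (n : ℕ) : (Fin n → X) → ℝ :=
  fun y => ∏ i, ω (y i)

/-- A function on `X^n` is symmetric. -/
def IsSymmFun {n : ℕ} (f : (Fin n → X) → ℝ) : Prop :=
  ∀ (π : Equiv.Perm (Fin n)) (y : Fin n → X), f (y ∘ π) = f y

end Defs

/-- The set of surjections `Fin n → Fin k`; these correspond to set partitions of
`{1,…,n}` into `k` nonempty blocks together with an ordering of the blocks. -/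
noncomputable def surjs (n k : ℕ) : Finset (Fin n → Fin k) :=
  Finset.univ.filter (fun g => Function.Surjective g)

/-- Cardinality of the fiber `g⁻¹(i)` (the size of block `i`). -/
def fiberCard {n k : ℕ} (g : Fin n → Fin k) (i : Fin k) : ℕ :=
  (Finset.univ.filter (fun j => g j = i)).card

section Ops

variable {X : Type*} [Fintype X] [DecidableEq X]

/-- Stirling operator of the second kind `S(n,k) = Σ_{λ ∈ UP(n,k)} D_λ`:
summing the substitute-and-symmetrize operators over unordered partitions of `{1,…,n}`
into `k` nonempty blocks is the same as summing `f(y ∘ g)` over the surjections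
`g : Fin n → Fin k` and dividing by `k!`. -/
noncomputable def Sop (n k : ℕ) (f : (Fin n → X) → ℝ) : (Fin k → X) → ℝ :=
  fun y => (∑ g ∈ surjs n k, f (y ∘ g)) / k.factorial

/-- Unsigned Stirling operator of the first kind
`c(n,k) = Σ_{λ={λ₁,…,λ_k} ∈ UP(n,k)} (|λ₁|−1)!⋯(|λ_k|−1)! · D_λ`. -/
noncomputable def cop (n k : ℕ) (f : (Fin n → X) → ℝ) : (Fin k → X) → ℝ :=
  fun y => (∑ g ∈ surjs n k, (∏ i : Fin k, ((fiberCard g i - 1).factorial : ℝ)) * f (y ∘ g)) /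
    k.factorial

/-- Stirling operator of the first kind `s(n,k) = (−1)^{n−k} c(n,k)`. -/
noncomputable def sop (n k : ℕ) (f : (Fin n → X) → ℝ) : (Fin k → X) → ℝ :=
  fun y => (-1 : ℝ) ^ (n - k) * cop n k f y

/-- Lah operator `L(n,k) = Σ_{λ={λ₁,…,λ_k} ∈ UP(n,k)} |λ₁|!⋯|λ_k|! · D_λ`. -/
noncomputable def Lop (n k : ℕ) (f : (Fin n → X) → ℝ) : (Fin k → X) → ℝ :=
  fun y => (∑ g ∈ surjs n k, (∏ i : Fin k, ((fiberCard g i).factorial : ℝ)) * f (y ∘ g)) /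
    k.factorial

end Ops

lemma superset_sign_sum {k : ℕ} (S : Finset (Fin k)) :
    ∑ A : Finset (Fin k), (if S ⊆ A then ((-1 : ℝ)) ^ A.card else 0)
      = if S = Finset.univ then (-1 : ℝ) ^ k else 0 := by
  classical
  rw [← Finset.sum_filter]
  have hbij : ∑ A ∈ Finset.univ.filter (fun A => S ⊆ A), ((-1 : ℝ)) ^ A.card
      = ∑ B ∈ Sᶜ.powerset, ((-1 : ℝ)) ^ (Bᶜ).card := by
    refine Finset.sum_bij' (fun A _ => Aᶜ) (fun B _ => Bᶜ) ?_ ?_ ?_ ?_ ?_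
    · intro A hA
      simp only [Finset.mem_filter] at hA
      simpa [Finset.mem_powerset, Finset.compl_subset_compl] using hA.2
    · intro B hB
      simp only [Finset.mem_powerset] at hB
      simp only [Finset.mem_filter, Finset.mem_univ, true_and]
      simpa using Finset.compl_subset_compl.mpr hB
    · intro A _; simp
    · intro B _; simp
    · intro A _; simp
  rw [hbij]
  have hcard : ∀ B ∈ Sᶜ.powerset, ((-1 : ℝ)) ^ (Bᶜ).card = (-1 : ℝ) ^ k * (-1 : ℝ) ^ B.card := by
    intro B _
    have h1 : (Bᶜ).card + B.card = k := by
      have hle : B.card ≤ k := by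
        simpa using Finset.card_le_univ B
      rw [Finset.card_compl]
      simp only [Fintype.card_fin]
      omega
    have : ((-1 : ℝ)) ^ (Bᶜ).card * (-1 : ℝ) ^ B.card = (-1 : ℝ) ^ k := by
      rw [← pow_add, h1]
    calc ((-1 : ℝ)) ^ (Bᶜ).card
        = ((-1 : ℝ)) ^ (Bᶜ).card * ((-1 : ℝ) ^ B.card * (-1 : ℝ) ^ B.card) := by
          rw [← pow_add, Even.neg_one_pow ⟨B.card, rfl⟩, mul_one]
      _ = (-1 : ℝ) ^ k * (-1 : ℝ) ^ B.card := by rw [← mul_assoc, this]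
  have hps : ∑ B ∈ Sᶜ.powerset, ((-1:ℝ)) ^ B.card = if Sᶜ = ∅ then 1 else 0 := by
    have hZ := Finset.sum_powerset_neg_one_pow_card (x := Sᶜ)
    calc ∑ B ∈ Sᶜ.powerset, ((-1:ℝ)) ^ B.card
        = ((∑ B ∈ Sᶜ.powerset, (-1:ℤ) ^ B.card : ℤ) : ℝ) := by push_cast; rfl
      _ = _ := by rw [hZ]; split <;> norm_num
  rw [Finset.sum_congr rfl hcard, ← Finset.mul_sum, hps]
  by_cases hS : S = Finset.univ
  · simp [hS]
  · have : Sᶜ ≠ ∅ := by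
      intro h
      exact hS (by simpa [Finset.compl_eq_empty_iff] using h)
    simp [hS, this]

lemma subtype_sum_eq {X : Type*} {n k : ℕ} (f : (Fin n → X) → ℝ) (x : Fin k → X)
    (A : Finset (Fin k)) [DecidableEq (Fin n → Fin k)] :
    ∑ j : Fin n → {a // a ∈ A}, f (fun t => x (j t).1)
      = ∑ g : Fin n → Fin k, (if ∀ t, g t ∈ A then f (x ∘ g) else 0) := by
  classical
  rw [← Finset.sum_filter]
  refine Finset.sum_bij' (fun j (_ : j ∈ Finset.univ) => fun t => (j t).1)
    (fun g hg => fun t => ⟨g t, ?_⟩) ?_ ?_ ?_ ?_ ?_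
  · simp only [Finset.mem_filter] at hg
    exact hg.2 t
  · intro j _
    simp only [Finset.mem_filter, Finset.mem_univ, true_and]
    exact fun t => (j t).2
  · intro g hg; exact Finset.mem_univ _
  · intro j _; rfl
  · intro g hg; rfl
  · intro j _; rfl

/-- Euler's formula for Stirling operators: for `1 ≤ k ≤ n`, symmetric
`f : X^n → ℝ` and points `x₁,…,x_k`,
`(S(n,k)f)(x₁,…,x_k) = ((−1)^k/k!) Σ_{η ⊆ [x₁,…,x_k]} (−1)^{|η|} ⟨η^{⊗n}, f⟩`,
the sum running over the 2^k sub-multisets `η` of `[x₁,…,x_k]` indexed by the subsets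
`A ⊆ {1,…,k}`, with `⟨η^{⊗n}, f⟩ = Σ_{j : {1,…,n} → A} f(x_{j(1)},…,x_{j(n)})`. -/
theorem stirling_second_euler_formula
    {X : Type*} [Fintype X] [DecidableEq X] {n k : ℕ} (hk : 1 ≤ k) (hkn : k ≤ n)
    (f : (Fin n → X) → ℝ) (hf : IsSymmFun f) (x : Fin k → X) :
    Sop n k f x
      = ((-1 : ℝ) ^ k / (k.factorial : ℝ)) *
          ∑ A : Finset (Fin k), (-1 : ℝ) ^ A.card *
            ∑ j : Fin n → {a // a ∈ A}, f (fun t => x (j t).1) := by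
  classical
  have key : ∑ g ∈ surjs n k, f (x ∘ g)
      = (-1:ℝ)^k * ∑ A : Finset (Fin k), (-1:ℝ)^A.card *
          ∑ j : Fin n → {a // a ∈ A}, f (fun t => x (j t).1) := by
    have step1 : ∀ A : Finset (Fin k), (-1:ℝ)^A.card *
        ∑ j : Fin n → {a // a ∈ A}, f (fun t => x (j t).1)
        = ∑ g : Fin n → Fin k,
            (if Finset.image g Finset.univ ⊆ A then (-1:ℝ)^A.card * f (x ∘ g) else 0) := by
      intro A
      rw [subtype_sum_eq f x A, Finset.mul_sum]
      refine Finset.sum_congr rfl fun g _ => ?_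
      have himg : (∀ t, g t ∈ A) ↔ Finset.image g Finset.univ ⊆ A := by
        simp [Finset.image_subset_iff]
      by_cases h : ∀ t, g t ∈ A
      · rw [if_pos h, if_pos (himg.mp h)]
      · rw [if_neg h, if_neg (fun hs => h (himg.mpr hs)), mul_zero]
    have swap :
        ∑ A : Finset (Fin k), (-1:ℝ)^A.card *
            ∑ j : Fin n → {a // a ∈ A}, f (fun t => x (j t).1)
          = ∑ g : Fin n → Fin k, f (x ∘ g) *
              ∑ A : Finset (Fin k),
                (if Finset.image g Finset.univ ⊆ A then (-1:ℝ)^A.card else 0) := by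
      rw [Finset.sum_congr rfl fun A _ => step1 A, Finset.sum_comm]
      refine Finset.sum_congr rfl fun g _ => ?_
      rw [Finset.mul_sum]
      refine Finset.sum_congr rfl fun A _ => ?_
      split <;> ring
    rw [swap]
    have hpt : ∀ g : Fin n → Fin k, f (x ∘ g) *
        ∑ A : Finset (Fin k),
          (if Finset.image g Finset.univ ⊆ A then (-1:ℝ)^A.card else 0)
        = (if g ∈ surjs n k then (-1:ℝ)^k * f (x ∘ g) else 0) := by
      intro g
      rw [superset_sign_sum]
      have hsurj : Finset.image g Finset.univ = Finset.univ ↔ g ∈ surjs n k := by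
        simp [surjs, Finset.eq_univ_iff_forall, Function.Surjective, eq_comm]
      by_cases hg : g ∈ surjs n k
      · rw [if_pos (hsurj.mpr hg), if_pos hg]; ring
      · rw [if_neg (fun h => hg (hsurj.mp h)), if_neg hg, mul_zero]
    rw [Finset.sum_congr rfl fun g _ => hpt g, ← Finset.sum_filter]
    have hfil : Finset.univ.filter (fun g => g ∈ surjs n k) = surjs n k := by
      ext g; simp
    rw [hfil, Finset.mul_sum]
    refine Finset.sum_congr rfl fun g _ => ?_
    rw [← mul_assoc, ← pow_add, Even.neg_one_pow ⟨k, rfl⟩, one_mul]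
  simp only [Sop]
  rw [key]
  ring
end

section
/- (Infinite-dimensional Olson's identity, vanishing and diagonal cases.) Let X be a finite set, m, n ≥ 1, l = m+n, and f : X^l → ℝ a symmetric function. For i ≥ 1, consider the operator T_i := Σ_{k=1}^{n} S(k+m, i) ∘ Sym_{m+k}(Id^{(m)} ⊗ s(n,k)) mapping symmetric functions on X^l to symmetric functions on X^i (where Id^{(m)} ⊗ s(n,k) applies s(n,k) to the last n variables and Sym symmetrizes). Then: (a) T_i f = 0 whenever i < n or i > l; and (b) for i = n, (T_n f)(x₁,…,x_n) = Σ_{j₁=1}^{n} ⋯ Σ_{j_m=1}^{n} f(x₁,…,x_n, x_{j₁},…,x_{j_m}). -/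
open Finset

/-- `Id^{(m)} ⊗ op`: apply an operator (from functions of `n` variables to functions of
`k` variables) to the last `n` variables, the first `m` variables being parameters. -/
def idTens {X : Type*} {m n k : ℕ}
    (op : ((Fin n → X) → ℝ) → ((Fin k → X) → ℝ)) (f : (Fin (m + n) → X) → ℝ) :
    (Fin (m + k) → X) → ℝ :=
  fun y => op (fun v => f (Fin.append (fun i => y (Fin.castAdd k i)) v))
    (fun j => y (Fin.natAdd m j))

/-- The operator `T_i = Σ_{k=1}^{n} S(k+m, i) ∘ Sym_{m+k}(Id^{(m)} ⊗ s(n,k))` from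
symmetric functions on `X^{m+n}` to symmetric functions on `X^i`. -/
noncomputable def olsonT {X : Type*} [Fintype X] [DecidableEq X] (m n : ℕ)
    (f : (Fin (m + n) → X) → ℝ) (i : ℕ) : (Fin i → X) → ℝ :=
  fun y => ∑ k ∈ Finset.Icc 1 n,
    Sop (k + m) i (castFun (Nat.add_comm m k) (symmFun (m + k) (idTens (sop n k) f))) y


section KeyCombinatorics

lemma mem_surjs {n k : ℕ} {g : Fin n → Fin k} : g ∈ surjs n k ↔ Function.Surjective g := by
  simp [surjs]

/-- the weighted sum over surjections refining ψ -/
noncomputable def W {ι : Type*} [DecidableEq ι] (n k : ℕ) (ψ : Fin n → ι) : ℝ :=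
  ∑ h ∈ surjs n k, if (∀ a b, h a = h b → ψ a = ψ b) then
    (∏ j, ((fiberCard h j - 1).factorial : ℝ)) else 0

lemma W_zero {ι : Type*} [DecidableEq ι] (n : ℕ) (ψ : Fin n → ι) :
    W n 0 ψ = if n = 0 then 1 else 0 := by
  rcases Nat.eq_zero_or_pos n with h | h
  · subst h
    simp only [W, if_pos rfl]
    rw [show surjs 0 0 = {fun a => a.elim0} from by
      ext g
      simp only [mem_surjs, Finset.mem_singleton]
      constructor
      · intro _; funext a; exact a.elim0
      · rintro rfl b; exact b.elim0]
    simp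
  · rw [if_neg (by omega)]
    apply Finset.sum_eq_zero
    intro h' hh'
    exact ((h' ⟨0, h⟩).elim0)

lemma W_big {ι : Type*} [DecidableEq ι] {n k : ℕ} (hk : n < k) (ψ : Fin n → ι) :
    W n k ψ = 0 := by
  apply Finset.sum_eq_zero
  intro h hh
  exact absurd (Fintype.card_le_of_surjective h (mem_surjs.1 hh)) (by simp; omega)

section Wrec
variable {ι : Type*} [DecidableEq ι]

lemma fiberCard_castSucc {n k : ℕ} (h : Fin (n+1) → Fin k) (t : Fin k) :
    fiberCard h t = fiberCard (h ∘ Fin.castSucc) t + (if h (Fin.last n) = t then 1 else 0) := by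
  simp only [fiberCard, Finset.card_filter]
  rw [Fin.sum_univ_castSucc]
  simp [Function.comp]

lemma fiberCard_pos {n k : ℕ} {h : Fin n → Fin k} (hs : Function.Surjective h) (t : Fin k) :
    1 ≤ fiberCard h t := by
  obtain ⟨a, ha⟩ := hs t
  have : a ∈ Finset.univ.filter (fun j => h j = t) := by simp [ha]
  exact Finset.card_pos.2 ⟨a, this⟩

/-- counting lemma: summing fiber sizes over fibers of color `c` gives size of color class -/
lemma count_fibers {n k : ℕ} (h' : Fin n → Fin k) (ψ' : Fin n → ι)
    (hr : ∀ a b, h' a = h' b → ψ' a = ψ' b) (c : ι) :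
    ∑ j : Fin k, (if (∀ a, h' a = j → ψ' a = c) then (fiberCard h' j : ℝ) else 0)
      = ((Finset.univ.filter (fun a : Fin n => ψ' a = c)).card : ℝ) := by
  have key : (Finset.univ.filter (fun a : Fin n => ψ' a = c)).card
      = ∑ j : Fin k, ((Finset.univ.filter (fun a : Fin n => ψ' a = c)).filter
          (fun a => h' a = j)).card := by
    exact Finset.card_eq_sum_card_fiberwise (fun x _ => Finset.mem_univ (h' x))
  rw [key]
  push_cast
  apply Finset.sum_congr rfl
  intro j _
  by_cases hco : ∀ a, h' a = j → ψ' a = c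
  · rw [if_pos hco]
    congr 1
    unfold fiberCard
    congr 1
    ext a
    simp only [Finset.mem_filter, Finset.mem_univ, true_and]
    exact ⟨fun h => ⟨hco a h, h⟩, fun h => h.2⟩
  · rw [if_neg hco]
    push_neg at hco
    obtain ⟨a₀, ha₀, hc₀⟩ := hco
    have : ((Finset.univ.filter (fun a : Fin n => ψ' a = c)).filter
          (fun a => h' a = j)) = ∅ := by
      ext a
      simp only [Finset.mem_filter, Finset.mem_univ, true_and, Finset.notMem_empty, iff_false]
      rintro ⟨h1, h2⟩
      exact hc₀ ((hr a a₀ (h2.trans ha₀.symm)).symm.trans h1)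
    simp [this]

end Wrec

section Cases
variable {ι : Type*} [DecidableEq ι]

lemma caseB (n k : ℕ) (ψ : Fin (n+1) → ι) :
    ∑ h ∈ (surjs (n+1) (k+1)).filter (fun h => ¬ Function.Surjective (h ∘ Fin.castSucc)),
      (if (∀ a b, h a = h b → ψ a = ψ b) then ∏ t, ((fiberCard h t - 1).factorial : ℝ) else 0)
    = (k+1) * W n k (ψ ∘ Fin.castSucc) := by
  classical
  rw [show ((k:ℝ)+1) * W n k (ψ ∘ Fin.castSucc)
      = ∑ p ∈ (Finset.univ : Finset (Fin (k+1))) ×ˢ surjs n k,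
        (if (∀ a b, p.2 a = p.2 b → ψ (Fin.castSucc a) = ψ (Fin.castSucc b)) then
          ∏ t, ((fiberCard p.2 t - 1).factorial : ℝ) else 0) from by
    rw [Finset.sum_product]
    simp only [Finset.sum_const, W, Function.comp]
    rw [Finset.card_univ, Fintype.card_fin, nsmul_eq_mul]
    push_cast
    ring]
  symm
  apply Finset.sum_bij (i := fun (p : Fin (k+1) × (Fin n → Fin k)) _ =>
    Fin.snoc (p.1.succAbove ∘ p.2) p.1)
  · -- membership
    rintro ⟨j, h'⟩ hp
    simp only [Finset.mem_product, mem_surjs] at hp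
    obtain ⟨-, hs'⟩ := hp
    have hrest : (Fin.snoc (j.succAbove ∘ h') j : Fin (n+1) → Fin (k+1)) ∘ Fin.castSucc
        = j.succAbove ∘ h' := funext fun a => Fin.snoc_castSucc _ _ a
    rw [Finset.mem_filter, mem_surjs]
    refine ⟨?_, ?_⟩
    · intro t
      by_cases ht : t = j
      · exact ⟨Fin.last n, by simp [Fin.snoc_last, ht]⟩
      · obtain ⟨t', ht'⟩ := Fin.exists_succAbove_eq ht
        obtain ⟨a, ha⟩ := hs' t'
        exact ⟨Fin.castSucc a, by simp [Fin.snoc_castSucc, Function.comp, ha, ht']⟩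
    · intro hs
      obtain ⟨b, hb⟩ := hs j
      rw [show ((Fin.snoc (j.succAbove ∘ h') j : Fin (n+1) → Fin (k+1)) ∘ Fin.castSucc) b
          = j.succAbove (h' b) from congrFun hrest b] at hb
      exact Fin.succAbove_ne j (h' b) hb
  · -- injectivity
    rintro ⟨j₁, h₁⟩ hp₁ ⟨j₂, h₂⟩ hp₂ heq
    have hj : j₁ = j₂ := by
      have := congrFun heq (Fin.last n)
      simpa [Fin.snoc_last] using this
    subst hj
    have hh : h₁ = h₂ := by
      funext a
      have := congrFun heq (Fin.castSucc a)
      simp only [Fin.snoc_castSucc, Function.comp] at this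
      exact Fin.succAbove_right_injective this
    simp [hh]
  · -- surjectivity
    intro h hmem
    rw [Finset.mem_filter, mem_surjs] at hmem
    obtain ⟨hsurj, hns⟩ := hmem
    have hne : ∀ a : Fin n, h (Fin.castSucc a) ≠ h (Fin.last n) := by
      rw [Function.Surjective] at hns
      push_neg at hns
      obtain ⟨t, ht⟩ := hns
      have hlt : h (Fin.last n) = t := by
        obtain ⟨b, hb⟩ := hsurj t
        cases b using Fin.lastCases with
        | last => exact hb
        | cast a => exact absurd hb (ht a)
      rw [hlt]
      exact fun a => ht a
    set j := h (Fin.last n) with hj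
    have hspec : ∀ a : Fin n, j.succAbove ((Fin.exists_succAbove_eq (hne a)).choose)
        = h (Fin.castSucc a) := fun a => (Fin.exists_succAbove_eq (hne a)).choose_spec
    set h' : Fin n → Fin k := fun a => (Fin.exists_succAbove_eq (hne a)).choose with hh'
    have hs' : Function.Surjective h' := by
      intro t'
      obtain ⟨b, hb⟩ := hsurj (j.succAbove t')
      cases b using Fin.lastCases with
      | last => exact absurd hb.symm (Fin.succAbove_ne j t')
      | cast a =>
        exact ⟨a, Fin.succAbove_right_injective (p := j) ((hspec a).trans (hb.trans rfl))⟩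
    refine ⟨⟨j, h'⟩, by simp [Finset.mem_product, mem_surjs, hs'], ?_⟩
    funext b
    cases b using Fin.lastCases with
    | last => simp [Fin.snoc_last, hj]
    | cast a =>
      rw [show (Fin.snoc (j.succAbove ∘ h') j : Fin (n+1) → Fin (k+1)) (Fin.castSucc a)
        = j.succAbove (h' a) from Fin.snoc_castSucc _ _ a]
      exact hspec a
  · -- values
    rintro ⟨j, h'⟩ hp
    simp only [Finset.mem_product, mem_surjs] at hp
    obtain ⟨-, hs'⟩ := hp
    set h : Fin (n+1) → Fin (k+1) := Fin.snoc (j.succAbove ∘ h') j with hhdef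
    have hcast : ∀ a : Fin n, h (Fin.castSucc a) = j.succAbove (h' a) :=
      fun a => Fin.snoc_castSucc _ _ a
    have hlast : h (Fin.last n) = j := Fin.snoc_last _ _
    have hcond : (∀ a b, h' a = h' b → ψ (Fin.castSucc a) = ψ (Fin.castSucc b))
        ↔ (∀ a b, h a = h b → ψ a = ψ b) := by
      constructor
      · intro hr a b hab
        cases a using Fin.lastCases with
        | last =>
          cases b using Fin.lastCases with
          | last => rfl
          | cast b' =>
            rw [hlast, hcast b'] at hab
            exact absurd hab.symm (Fin.succAbove_ne j (h' b'))
        | cast a' =>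
          cases b using Fin.lastCases with
          | last =>
            rw [hlast, hcast a'] at hab
            exact absurd hab (Fin.succAbove_ne j (h' a'))
          | cast b' =>
            rw [hcast a', hcast b'] at hab
            exact hr a' b' (Fin.succAbove_right_injective hab)
      · intro hr a b hab
        exact hr (Fin.castSucc a) (Fin.castSucc b)
          (by rw [hcast a, hcast b, hab])
    have hwt : ∏ t, ((fiberCard h t - 1).factorial : ℝ)
        = ∏ t', ((fiberCard h' t' - 1).factorial : ℝ) := by
      rw [Fin.prod_univ_succAbove (fun t => ((fiberCard h t - 1).factorial : ℝ)) j]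
      have h1 : fiberCard h j = 1 := by
        rw [fiberCard_castSucc, if_pos hlast]
        have : fiberCard (h ∘ Fin.castSucc) j = 0 := by
          unfold fiberCard
          rw [Finset.card_eq_zero]
          ext a
          simp only [Finset.mem_filter, Finset.mem_univ, true_and, Finset.notMem_empty,
            iff_false, Function.comp]
          rw [hcast a]
          exact Fin.succAbove_ne j (h' a)
        omega
      have h2 : ∀ t', fiberCard h (j.succAbove t') = fiberCard h' t' := by
        intro t'
        rw [fiberCard_castSucc, if_neg (by rw [hlast]; exact (Fin.succAbove_ne j t').symm)]
        have : fiberCard (h ∘ Fin.castSucc) (j.succAbove t') = fiberCard h' t' := by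
          unfold fiberCard
          congr 1
          ext a
          simp only [Finset.mem_filter, Finset.mem_univ, true_and, Function.comp]
          rw [hcast a]
          exact ⟨fun hx => Fin.succAbove_right_injective hx, fun hx => by rw [hx]⟩
        omega
      rw [h1]
      simp only [h2]
      simp
    rw [if_congr hcond rfl rfl, hwt]

end Cases

section CaseA
variable {ι : Type*} [DecidableEq ι]

lemma caseA (n k : ℕ) (ψ : Fin (n+1) → ι) :
    ∑ h ∈ (surjs (n+1) (k+1)).filter (fun h => Function.Surjective (h ∘ Fin.castSucc)),
      (if (∀ a b, h a = h b → ψ a = ψ b) then ∏ t, ((fiberCard h t - 1).factorial : ℝ) else 0)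
    = ((Finset.univ.filter (fun a : Fin n => ψ a.castSucc = ψ (Fin.last n))).card : ℝ)
        * W n (k+1) (ψ ∘ Fin.castSucc) := by
  classical
  have step1 : ∑ h ∈ (surjs (n+1) (k+1)).filter (fun h => Function.Surjective (h ∘ Fin.castSucc)),
      (if (∀ a b, h a = h b → ψ a = ψ b) then ∏ t, ((fiberCard h t - 1).factorial : ℝ) else 0)
    = ∑ p ∈ (Finset.univ : Finset (Fin (k+1))) ×ˢ surjs n (k+1),
      (if ((∀ a b, p.2 a = p.2 b → ψ a.castSucc = ψ b.castSucc)
            ∧ (∀ a, p.2 a = p.1 → ψ a.castSucc = ψ (Fin.last n))) then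
        (fiberCard p.2 p.1 : ℝ) * ∏ t, ((fiberCard p.2 t - 1).factorial : ℝ) else 0) := by
    symm
    apply Finset.sum_bij (i := fun (p : Fin (k+1) × (Fin n → Fin (k+1))) _ =>
      Fin.snoc p.2 p.1)
    · rintro ⟨j, h'⟩ hp
      simp only [Finset.mem_product, mem_surjs] at hp
      obtain ⟨-, hs'⟩ := hp
      have hrest : (Fin.snoc h' j : Fin (n+1) → Fin (k+1)) ∘ Fin.castSucc = h' :=
        funext fun a => Fin.snoc_castSucc _ _ a
      rw [Finset.mem_filter, mem_surjs, hrest]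
      refine ⟨fun t => ?_, hs'⟩
      obtain ⟨a, ha⟩ := hs' t
      exact ⟨Fin.castSucc a, by rw [Fin.snoc_castSucc]; exact ha⟩
    · rintro ⟨j₁, h₁⟩ hp₁ ⟨j₂, h₂⟩ hp₂ heq
      have hj : j₁ = j₂ := by
        have := congrFun heq (Fin.last n)
        simpa [Fin.snoc_last] using this
      have hh : h₁ = h₂ := by
        funext a
        have := congrFun heq (Fin.castSucc a)
        simpa [Fin.snoc_castSucc] using this
      simp [hj, hh]
    · intro h hmem
      rw [Finset.mem_filter, mem_surjs] at hmem
      refine ⟨⟨h (Fin.last n), h ∘ Fin.castSucc⟩,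
        by simp [Finset.mem_product, mem_surjs, hmem.2], ?_⟩
      funext b
      cases b using Fin.lastCases with
      | last => simp [Fin.snoc_last]
      | cast a => simp [Fin.snoc_castSucc]
    · rintro ⟨j, h'⟩ hp
      simp only [Finset.mem_product, mem_surjs] at hp
      obtain ⟨-, hs'⟩ := hp
      set h : Fin (n+1) → Fin (k+1) := Fin.snoc h' j with hhdef
      have hcast : ∀ a : Fin n, h (Fin.castSucc a) = h' a := fun a => Fin.snoc_castSucc _ _ a
      have hlast : h (Fin.last n) = j := Fin.snoc_last _ _
      have hcond : ((∀ a b, h' a = h' b → ψ a.castSucc = ψ b.castSucc)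
            ∧ (∀ a, h' a = j → ψ a.castSucc = ψ (Fin.last n)))
          ↔ (∀ a b, h a = h b → ψ a = ψ b) := by
        constructor
        · rintro ⟨hr, hco⟩ a b hab
          cases a using Fin.lastCases with
          | last =>
            cases b using Fin.lastCases with
            | last => rfl
            | cast b' =>
              rw [hlast, hcast b'] at hab
              exact (hco b' hab.symm).symm
          | cast a' =>
            cases b using Fin.lastCases with
            | last =>
              rw [hlast, hcast a'] at hab
              exact hco a' hab
            | cast b' =>
              rw [hcast a', hcast b'] at hab
              exact hr a' b' hab
        · intro hr
          constructor
          · intro a b hab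
            exact hr (Fin.castSucc a) (Fin.castSucc b) (by rw [hcast a, hcast b, hab])
          · intro a ha
            exact hr (Fin.castSucc a) (Fin.last n) (by rw [hcast a, hlast, ha])
      have hfc : ∀ t, fiberCard h t = fiberCard h' t + (if t = j then 1 else 0) := by
        intro t
        rw [fiberCard_castSucc]
        have : h ∘ Fin.castSucc = h' := funext fun a => hcast a
        rw [this, hlast]
        congr 1
        simp only [eq_comm]
      have hwt : ∏ t, ((fiberCard h t - 1).factorial : ℝ)
          = (fiberCard h' j : ℝ) * ∏ t, ((fiberCard h' t - 1).factorial : ℝ) := by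
        rw [← Finset.mul_prod_erase Finset.univ
            (fun t => ((fiberCard h t - 1).factorial : ℝ)) (Finset.mem_univ j),
          ← Finset.mul_prod_erase Finset.univ
            (fun t => ((fiberCard h' t - 1).factorial : ℝ)) (Finset.mem_univ j),
          ← mul_assoc]
        have hterm : ((fiberCard h j - 1).factorial : ℝ)
            = (fiberCard h' j : ℝ) * ((fiberCard h' j - 1).factorial : ℝ) := by
          obtain ⟨x, hx⟩ : ∃ x, fiberCard h' j = x + 1 :=
            ⟨fiberCard h' j - 1, (Nat.succ_pred_eq_of_pos (fiberCard_pos hs' j)).symm⟩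
          rw [hfc j, if_pos rfl, hx]
          simp only [Nat.add_sub_cancel]
          rw [Nat.factorial_succ]
          push_cast
          ring
        rw [hterm]
        congr 1
        apply Finset.prod_congr rfl
        intro t ht
        rw [hfc t, if_neg (Finset.mem_erase.1 ht).1]
        simp
      rw [if_congr hcond rfl rfl, hwt]
  rw [step1, Finset.sum_product, Finset.sum_comm]
  rw [W, Finset.mul_sum]
  apply Finset.sum_congr rfl
  intro h' hh'
  rw [mem_surjs] at hh'
  simp only [Function.comp_apply]
  by_cases hr : ∀ a b, h' a = h' b → ψ a.castSucc = ψ b.castSucc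
  · rw [if_pos hr]
    have : ∀ j : Fin (k+1),
        (if ((∀ a b, h' a = h' b → ψ a.castSucc = ψ b.castSucc)
            ∧ (∀ a, h' a = j → ψ a.castSucc = ψ (Fin.last n))) then
          (fiberCard h' j : ℝ) * ∏ t, ((fiberCard h' t - 1).factorial : ℝ) else 0)
        = (if (∀ a, h' a = j → ψ a.castSucc = ψ (Fin.last n)) then (fiberCard h' j : ℝ) else 0)
          * ∏ t, ((fiberCard h' t - 1).factorial : ℝ) := by
      intro j
      by_cases hco : ∀ a, h' a = j → ψ a.castSucc = ψ (Fin.last n)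
      · rw [if_pos ⟨hr, hco⟩, if_pos hco]
      · rw [if_neg (fun hc => hco hc.2), if_neg hco, zero_mul]
    simp only [this]
    rw [← Finset.sum_mul]
    rw [count_fibers h' (fun a => ψ a.castSucc) hr (ψ (Fin.last n))]
  · rw [if_neg hr, mul_zero]
    apply Finset.sum_eq_zero
    intro j _
    rw [if_neg (fun hc => hr hc.1)]

lemma W_rec (n k : ℕ) (ψ : Fin (n+1) → ι) :
    W (n+1) (k+1) ψ = (k+1) * W n k (ψ ∘ Fin.castSucc)
      + ((Finset.univ.filter (fun a : Fin n => ψ a.castSucc = ψ (Fin.last n))).card : ℝ)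
        * W n (k+1) (ψ ∘ Fin.castSucc) := by
  classical
  rw [W, ← Finset.sum_filter_add_sum_filter_not (surjs (n+1) (k+1))
    (fun h => Function.Surjective (h ∘ Fin.castSucc))]
  rw [caseA n k ψ]
  have := caseB n k ψ
  rw [show (surjs (n+1) (k+1)).filter (fun h => ¬ Function.Surjective (h ∘ Fin.castSucc))
      = (surjs (n+1) (k+1)).filter (fun h => ¬ (fun h => Function.Surjective (h ∘ Fin.castSucc)) h)
    from rfl] at this
  rw [this]
  ring

end CaseA

lemma S_key {ι : Type*} [DecidableEq ι] :
    ∀ (n : ℕ) (ψ : Fin n → ι),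
    ∑ k ∈ Finset.range (n+1), (-1 : ℝ)^(n-k) / (Nat.factorial k) * W n k ψ
      = if Function.Injective ψ then 1 else 0 := by
  intro n
  induction n with
  | zero =>
    intro ψ
    have h0 : Function.Injective ψ := fun a b _ => Subsingleton.elim a b
    rw [if_pos h0]
    simp [W_zero]
  | succ n IH =>
    intro ψ
    set ψ' : Fin n → ι := ψ ∘ Fin.castSucc with hψ'
    set nc := (Finset.univ.filter (fun a : Fin n => ψ a.castSucc = ψ (Fin.last n))).card with hnc
    set Sn := ∑ k ∈ Finset.range (n+1), (-1:ℝ)^(n-k) / (Nat.factorial k) * W n k ψ' with hSn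
    have fact_succ : ∀ k : ℕ, ((k+1).factorial : ℝ) = ((k:ℝ)+1) * (k.factorial : ℝ) := by
      intro k; push_cast [Nat.factorial_succ]; ring
    have fact_ne : ∀ k : ℕ, (k.factorial : ℝ) ≠ 0 :=
      fun k => Nat.cast_ne_zero.2 (Nat.factorial_ne_zero k)
    have hstep : ∑ k ∈ Finset.range (n+2), (-1 : ℝ)^(n+1-k) / (Nat.factorial k) * W (n+1) k ψ
        = Sn + (nc : ℝ) * (- Sn - (-1:ℝ)^(n+1) * (if n = 0 then 1 else 0)) := by
      rw [Finset.sum_range_succ']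
      have hf0 : (-1 : ℝ)^(n+1-0) / (Nat.factorial 0) * W (n+1) 0 ψ = 0 := by
        rw [W_zero]; simp
      rw [hf0, add_zero]
      have hterm : ∀ k ∈ Finset.range (n+1),
          (-1 : ℝ)^(n+1-(k+1)) / (Nat.factorial (k+1)) * W (n+1) (k+1) ψ
          = (-1:ℝ)^(n-k) / (Nat.factorial k) * W n k ψ'
            + (nc:ℝ) * ((-1:ℝ)^(n-k) / (Nat.factorial (k+1)) * W n (k+1) ψ') := by
        intro k _
        rw [W_rec n k ψ, Nat.succ_sub_succ]
        rw [fact_succ k]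
        have h2 : ((k:ℝ)+1) ≠ 0 := by positivity
        field_simp
        ring
      rw [Finset.sum_congr rfl hterm, Finset.sum_add_distrib, ← Finset.mul_sum]
      congr 1
      have hT : ∑ k ∈ Finset.range (n+1), (-1:ℝ)^(n-k) / (Nat.factorial (k+1)) * W n (k+1) ψ'
          = - Sn - (-1:ℝ)^(n+1) * (if n = 0 then 1 else 0) := by
        have hre : ∀ k ∈ Finset.range (n+1),
            (-1:ℝ)^(n-k) / (Nat.factorial (k+1)) * W n (k+1) ψ'
            = (-1:ℝ)^(n+1-(k+1)) / (Nat.factorial (k+1)) * W n (k+1) ψ' := by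
          intro k _; rw [Nat.succ_sub_succ]
        rw [Finset.sum_congr rfl hre]
        have := Finset.sum_range_succ' (fun k => (-1:ℝ)^(n+1-k) / (Nat.factorial k) * W n k ψ') (n+1)
        have hsum : ∑ k ∈ Finset.range (n+1),
            (-1:ℝ)^(n+1-(k+1)) / (Nat.factorial (k+1)) * W n (k+1) ψ'
            = (∑ k ∈ Finset.range (n+2), (-1:ℝ)^(n+1-k) / (Nat.factorial k) * W n k ψ')
              - (-1:ℝ)^(n+1-0) / (Nat.factorial 0) * W n 0 ψ' := by
          rw [this]; ring
        rw [hsum, Finset.sum_range_succ]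
        rw [W_big (Nat.lt_succ_self n)]
        have hneg : ∑ k ∈ Finset.range (n+1), (-1:ℝ)^(n+1-k) / (Nat.factorial k) * W n k ψ'
            = - Sn := by
          rw [hSn, ← Finset.sum_neg_distrib]
          apply Finset.sum_congr rfl
          intro k hk
          rw [Finset.mem_range] at hk
          have : n + 1 - k = (n - k) + 1 := by omega
          rw [this, pow_succ]
          ring
        rw [hneg, W_zero]
        simp
      rw [hT]
    have hIH : Sn = if Function.Injective ψ' then 1 else 0 := by rw [hSn]; exact IH ψ'
    rw [hstep, hIH]
    by_cases hn0 : n = 0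
    · subst hn0
      have hnc0 : nc = 0 := by simp [hnc]
      have hinj' : Function.Injective ψ' := fun a b _ => Subsingleton.elim a b
      have hinj : Function.Injective ψ := fun a b _ => Fin.ext (by omega)
      rw [if_pos hinj', if_pos hinj, hnc0]
      simp
    · rw [if_neg hn0]
      by_cases hnc0 : nc = 0
      · have hne : ∀ a : Fin n, ψ a.castSucc ≠ ψ (Fin.last n) := by
          intro a ha
          have : a ∈ Finset.univ.filter (fun a : Fin n => ψ a.castSucc = ψ (Fin.last n)) := by
            simp [ha]
          rw [hnc] at hnc0
          exact absurd (Finset.card_eq_zero.1 hnc0 ▸ this) (Finset.notMem_empty a)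
        have hiff : Function.Injective ψ ↔ Function.Injective ψ' := by
          constructor
          · intro h a b hab
            exact Fin.castSucc_injective n (h hab)
          · intro h a b hab
            cases a using Fin.lastCases with
            | last =>
              cases b using Fin.lastCases with
              | last => rfl
              | cast b' => exact absurd hab.symm (hne b')
            | cast a' =>
              cases b using Fin.lastCases with
              | last => exact absurd hab (hne a')
              | cast b' => rw [h (show ψ' a' = ψ' b' from hab)]
          
        rw [hnc0]
        simp only [Nat.cast_zero, zero_mul, mul_zero, add_zero]
        by_cases hi : Function.Injective ψ'
        · rw [if_pos hi, if_pos (hiff.2 hi)]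
        · rw [if_neg hi, if_neg (fun h => hi (hiff.1 h))]
      · have hninj : ¬ Function.Injective ψ := by
          have : (Finset.univ.filter (fun a : Fin n => ψ a.castSucc = ψ (Fin.last n))).Nonempty := by
            rw [← Finset.card_pos, ← hnc]
            omega
          obtain ⟨a, ha⟩ := this
          rw [Finset.mem_filter] at ha
          intro hinj
          have := hinj ha.2
          exact absurd (congrArg Fin.val this) (by simp [Fin.last]; omega)
        rw [if_neg hninj]
        by_cases hi : Function.Injective ψ'
        · have hnc1 : nc = 1 := by
            rw [hnc]
            have hle : (Finset.univ.filter
                (fun a : Fin n => ψ a.castSucc = ψ (Fin.last n))).card ≤ 1 := by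
              apply Finset.card_le_one.2
              intro a ha b hb
              rw [Finset.mem_filter] at ha hb
              exact hi (show ψ' a = ψ' b from ha.2.trans hb.2.symm)
            omega
          rw [if_pos hi, hnc1]
          push_cast
          ring
        · rw [if_neg hi]
          ring

end KeyCombinatorics


section Reduction

lemma S_key_Icc {ι : Type*} [DecidableEq ι] {n : ℕ} (hn : 1 ≤ n) (ψ : Fin n → ι) :
    ∑ k ∈ Finset.Icc 1 n, (-1 : ℝ)^(n-k) / (Nat.factorial k) * W n k ψ
      = if Function.Injective ψ then 1 else 0 := by
  rw [← S_key n ψ]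
  have hins : Finset.range (n+1) = insert 0 (Finset.Icc 1 n) := by
    ext a
    simp only [Finset.mem_range, Finset.mem_insert, Finset.mem_Icc]
    omega
  rw [hins, Finset.sum_insert (by simp)]
  rw [W_zero, if_neg (by omega)]
  ring

variable {X : Type*} [Fintype X] [DecidableEq X]

lemma L1 {m : ℕ} (k i : ℕ) (K : (Fin (m+k) → X) → ℝ) (y : Fin i → X) :
    Sop (k+m) i (castFun (Nat.add_comm m k) (symmFun (m+k) K)) y
    = (∑ σ ∈ surjs (m+k) i, K (y ∘ σ)) / i.factorial := by
  unfold Sop castFun symmFun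
  have key : ∑ g ∈ surjs (k+m) i, ∑ π : Equiv.Perm (Fin (m+k)),
      K ((fun a => (y ∘ g) (Fin.cast (Nat.add_comm m k) a)) ∘ π)
      = ((m+k).factorial : ℝ) * ∑ σ ∈ surjs (m+k) i, K (y ∘ σ) := by
    rw [Finset.sum_comm]
    have hπ : ∀ π : Equiv.Perm (Fin (m+k)),
        ∑ g ∈ surjs (k+m) i, K ((fun a => (y ∘ g) (Fin.cast (Nat.add_comm m k) a)) ∘ π)
        = ∑ σ ∈ surjs (m+k) i, K (y ∘ σ) := by
      intro π
      apply Finset.sum_nbij'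
        (i := fun g => fun a : Fin (m+k) => g (Fin.cast (Nat.add_comm m k) (π a)))
        (j := fun σ => fun b : Fin (k+m) => σ (π.symm (Fin.cast (Nat.add_comm k m) b)))
      · intro g hg
        rw [mem_surjs] at hg ⊢
        intro t
        obtain ⟨b, hb⟩ := hg t
        exact ⟨π.symm (Fin.cast (Nat.add_comm k m) b), by simpa using hb⟩
      · intro σ hσ
        rw [mem_surjs] at hσ ⊢
        intro t
        obtain ⟨a, ha⟩ := hσ t
        exact ⟨Fin.cast (Nat.add_comm m k) (π a), by simpa using ha⟩
      · intro g _
        funext b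
        simp
      · intro σ _
        funext a
        simp
      · intro g _
        rfl
    rw [Finset.sum_congr rfl (fun π _ => hπ π), Finset.sum_const]
    simp [Fintype.card_perm, mul_comm]
  rw [← Finset.sum_div, key]
  have hne : (((m+k).factorial : ℝ)) ≠ 0 := Nat.cast_ne_zero.2 (Nat.factorial_ne_zero (m+k))
  field_simp

lemma L2 {m n : ℕ} (k : ℕ) (f : (Fin (m+n) → X) → ℝ) (u : Fin (m+k) → X) :
    idTens (sop n k) f u = (-1:ℝ)^(n-k) / (Nat.factorial k) *
      ∑ h ∈ surjs n k, (∏ j, ((fiberCard h j - 1).factorial : ℝ)) *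
        f (Fin.append (fun s => u (Fin.castAdd k s)) (fun t => u (Fin.natAdd m (h t)))) := by
  unfold idTens sop cop
  simp only [Function.comp_def]
  ring

/-- splitting a function on `Fin (m+k)` into its two parts -/
def appendEquiv (m k : ℕ) (γ : Type*) : ((Fin m → γ) × (Fin k → γ)) ≃ (Fin (m+k) → γ) where
  toFun p := Fin.append p.1 p.2
  invFun σ := (fun s => σ (Fin.castAdd k s), fun t => σ (Fin.natAdd m t))
  left_inv p := by
    ext a
    · simp [Fin.append_left]
    · simp [Fin.append_right]
  right_inv σ := by
    funext a
    cases a using Fin.addCases with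
    | left s => simp [Fin.append_left]
    | right t => simp [Fin.append_right]

lemma surjective_append_iff {m k i : ℕ} (A : Fin m → Fin i) (B : Fin k → Fin i) :
    Function.Surjective (Fin.append A B)
      ↔ (∀ t, (∃ s, A s = t) ∨ (∃ s, B s = t)) := by
  constructor
  · intro h t
    obtain ⟨a, ha⟩ := h t
    cases a using Fin.addCases with
    | left s => rw [Fin.append_left] at ha; exact Or.inl ⟨s, ha⟩
    | right s => rw [Fin.append_right] at ha; exact Or.inr ⟨s, ha⟩
  · intro hc t
    rcases hc t with ⟨s, hs⟩ | ⟨s, hs⟩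
    · exact ⟨Fin.castAdd k s, by rw [Fin.append_left]; exact hs⟩
    · exact ⟨Fin.natAdd m s, by rw [Fin.append_right]; exact hs⟩

lemma L3 {m k i : ℕ} (F : (Fin m → Fin i) → (Fin k → Fin i) → ℝ) :
    ∑ σ ∈ surjs (m+k) i, F (fun s => σ (Fin.castAdd k s)) (fun t => σ (Fin.natAdd m t))
    = ∑ A : Fin m → Fin i, ∑ B : Fin k → Fin i,
        if (∀ t, (∃ s, A s = t) ∨ (∃ s, B s = t)) then F A B else 0 := by
  classical
  have hmain : ∑ σ ∈ surjs (m+k) i,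
      F (fun s => σ (Fin.castAdd k s)) (fun t => σ (Fin.natAdd m t))
      = ∑ p : (Fin m → Fin i) × (Fin k → Fin i),
          (if (∀ t, (∃ s, p.1 s = t) ∨ (∃ s, p.2 s = t)) then F p.1 p.2 else 0) := by
    rw [show surjs (m+k) i = Finset.univ.filter (fun g => Function.Surjective g) from rfl,
      Finset.sum_filter]
    refine (Fintype.sum_equiv (appendEquiv m k (Fin i)) _ _ ?_).symm
    rintro ⟨A, B⟩
    have h1 : (fun s => (appendEquiv m k (Fin i)) (A, B) (Fin.castAdd k s)) = A := by
      funext s; simp [appendEquiv, Fin.append_left]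
    have h2 : (fun t => (appendEquiv m k (Fin i)) (A, B) (Fin.natAdd m t)) = B := by
      funext t; simp [appendEquiv, Fin.append_right]
    have h3 : Function.Surjective ((appendEquiv m k (Fin i)) (A, B))
        ↔ (∀ t, (∃ s, A s = t) ∨ (∃ s, B s = t)) := surjective_append_iff A B
    by_cases hc : ∀ t, (∃ s, A s = t) ∨ (∃ s, B s = t)
    · rw [if_pos hc, if_pos (h3.2 hc), h1, h2]
    · rw [if_neg hc, if_neg (fun hs => hc (h3.1 hs))]
  rw [hmain, Fintype.sum_prod_type]

end Reduction


section Fibering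

lemma sumB {n' k i' : ℕ} {h : Fin n' → Fin k} (hs : Function.Surjective h)
    (ψ : Fin n' → Fin i') (P : (Fin k → Fin i') → Prop) [DecidablePred P]
    (Q : Prop) [Decidable Q]
    (hPQ : ∀ B : Fin k → Fin i', (fun t => B (h t)) = ψ → (P B ↔ Q)) (c : ℝ) :
    ∑ B : Fin k → Fin i', (if ((fun t => B (h t)) = ψ ∧ P B) then c else 0)
    = if ((∀ a b, h a = h b → ψ a = ψ b) ∧ Q) then c else 0 := by
  classical
  by_cases hr : ∀ a b, h a = h b → ψ a = ψ b
  · set B₀ : Fin k → Fin i' := fun j => ψ (hs j).choose with hB₀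
    have hB₀h : (fun t => B₀ (h t)) = ψ := by
      funext t
      exact hr _ _ ((hs (h t)).choose_spec)
    rw [Finset.sum_eq_single B₀]
    · by_cases hq : Q
      · rw [if_pos ⟨hB₀h, (hPQ B₀ hB₀h).2 hq⟩, if_pos ⟨hr, hq⟩]
      · rw [if_neg (fun hc => hq ((hPQ B₀ hB₀h).1 hc.2)), if_neg (fun hc => hq hc.2)]
    · intro B _ hne
      rw [if_neg]
      rintro ⟨hBh, -⟩
      apply hne
      funext j
      obtain ⟨t, ht⟩ := hs j
      calc B j = B (h t) := by rw [ht]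
        _ = ψ t := congrFun hBh t
        _ = B₀ (h t) := (congrFun hB₀h t).symm
        _ = B₀ j := by rw [ht]
    · intro hB₀mem
      exact absurd (Finset.mem_univ B₀) hB₀mem
  · rw [if_neg (fun hc => hr hc.1)]
    apply Finset.sum_eq_zero
    intro B _
    rw [if_neg]
    rintro ⟨hBh, -⟩
    apply hr
    intro a b hab
    calc ψ a = B (h a) := (congrFun hBh a).symm
      _ = B (h b) := by rw [hab]
      _ = ψ b := congrFun hBh b

lemma L4 {n k i m' : ℕ} (hk : 1 ≤ k) (A : Fin m' → Fin i) (c : ℝ)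
    (wt : (Fin n → Fin k) → ℝ) (G : (Fin n → Fin i) → ℝ) :
    ∑ B : Fin k → Fin i, (if (∀ t, (∃ s, A s = t) ∨ (∃ s, B s = t))
        then c * ∑ h ∈ surjs n k, wt h * G (fun t => B (h t)) else 0)
    = ∑ ψ : Fin n → Fin i, (if (∀ t, (∃ s, A s = t) ∨ (∃ s, ψ s = t))
        then (c * ∑ h ∈ surjs n k, (if (∀ a b, h a = h b → ψ a = ψ b) then wt h else 0)) * G ψ
        else 0) := by
  classical
  -- step 1: push the `if` inside the sum over h
  have s1 : ∀ B : Fin k → Fin i,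
      (if (∀ t, (∃ s, A s = t) ∨ (∃ s, B s = t))
        then c * ∑ h ∈ surjs n k, wt h * G (fun t => B (h t)) else 0)
      = ∑ h ∈ surjs n k, (if (∀ t, (∃ s, A s = t) ∨ (∃ s, B s = t))
          then c * (wt h * G (fun t => B (h t))) else 0) := by
    intro B
    split_ifs with hc
    · rw [Finset.mul_sum]
    · exact (Finset.sum_const_zero).symm
  rw [Finset.sum_congr rfl (fun B _ => s1 B), Finset.sum_comm]
  -- step 2: introduce the sum over ψ
  have s2 : ∀ h ∈ surjs n k, ∀ B : Fin k → Fin i,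
      (if (∀ t, (∃ s, A s = t) ∨ (∃ s, B s = t))
          then c * (wt h * G (fun t => B (h t))) else 0)
      = ∑ ψ : Fin n → Fin i, (if ((fun t => B (h t)) = ψ ∧ (∀ t, (∃ s, A s = t) ∨ (∃ s, B s = t)))
          then c * (wt h * G ψ) else 0) := by
    intro h _ B
    symm
    simp only [ite_and]
    rw [Finset.sum_ite_eq]
    simp only [Finset.mem_univ, if_true]
  rw [Finset.sum_congr rfl (fun h hh => Finset.sum_congr rfl (fun B _ => s2 h hh B))]
  have s3 : ∀ h ∈ surjs n k, ∀ ψ : Fin n → Fin i,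
      ∑ B : Fin k → Fin i, (if ((fun t => B (h t)) = ψ ∧ (∀ t, (∃ s, A s = t) ∨ (∃ s, B s = t)))
          then c * (wt h * G ψ) else 0)
      = if ((∀ a b, h a = h b → ψ a = ψ b) ∧ (∀ t, (∃ s, A s = t) ∨ (∃ s, ψ s = t)))
          then c * (wt h * G ψ) else 0 := by
    intro h hh ψ
    apply sumB (mem_surjs.1 hh) ψ _ _ ?_ _
    intro B hB
    constructor
    · intro hP t
      rcases hP t with h1 | ⟨s, hs⟩
      · exact Or.inl h1
      · obtain ⟨t', ht'⟩ := mem_surjs.1 hh s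
        refine Or.inr ⟨t', ?_⟩
        calc ψ t' = B (h t') := (congrFun hB t').symm
          _ = B s := by rw [ht']
          _ = t := hs
    · intro hQ t
      rcases hQ t with h1 | ⟨s', hs'⟩
      · exact Or.inl h1
      · exact Or.inr ⟨h s', (congrFun hB s').trans hs'⟩
  have s4 : ∀ h ∈ surjs n k,
      (∑ B : Fin k → Fin i, ∑ ψ : Fin n → Fin i,
        (if ((fun t => B (h t)) = ψ ∧ (∀ t, (∃ s, A s = t) ∨ (∃ s, B s = t)))
          then c * (wt h * G ψ) else 0))
      = ∑ ψ : Fin n → Fin i,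
          (if ((∀ a b, h a = h b → ψ a = ψ b) ∧ (∀ t, (∃ s, A s = t) ∨ (∃ s, ψ s = t)))
            then c * (wt h * G ψ) else 0) := by
    intro h hh
    rw [Finset.sum_comm]
    exact Finset.sum_congr rfl (fun ψ _ => s3 h hh ψ)
  rw [Finset.sum_congr rfl s4, Finset.sum_comm]
  apply Finset.sum_congr rfl
  intro ψ _
  by_cases hcov : ∀ t, (∃ s, A s = t) ∨ (∃ s, ψ s = t)
  · rw [if_pos hcov]
    have hterm : ∀ h ∈ surjs n k,
        (if ((∀ a b, h a = h b → ψ a = ψ b) ∧ (∀ t, (∃ s, A s = t) ∨ (∃ s, ψ s = t)))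
          then c * (wt h * G ψ) else 0)
        = (if (∀ a b, h a = h b → ψ a = ψ b) then c * wt h else 0) * G ψ := by
      intro h _
      by_cases hrf : ∀ a b, h a = h b → ψ a = ψ b
      · rw [if_pos ⟨hrf, hcov⟩, if_pos hrf]; ring
      · rw [if_neg (fun hc => hrf hc.1), if_neg hrf, zero_mul]
    rw [Finset.sum_congr rfl hterm, ← Finset.sum_mul]
    congr 1
    rw [Finset.mul_sum]
    apply Finset.sum_congr rfl
    intro h _
    split_ifs <;> ring
  · rw [if_neg hcov]
    apply Finset.sum_eq_zero
    intro h _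
    rw [if_neg (fun hc => hcov hc.2)]

end Fibering


lemma olsonT_eq {X : Type*} [Fintype X] [DecidableEq X] {m n : ℕ} (hn : 1 ≤ n)
    (f : (Fin (m+n) → X) → ℝ) (i : ℕ) (y : Fin i → X) :
    olsonT m n f i y = (∑ A : Fin m → Fin i, ∑ ψ : Fin n → Fin i,
      if ((∀ t, (∃ s, A s = t) ∨ (∃ s, ψ s = t)) ∧ Function.Injective ψ)
      then f (Fin.append (fun s => y (A s)) (fun t => y (ψ t))) else 0) / i.factorial := by
  classical
  calc olsonT m n f i y
      = ∑ k ∈ Finset.Icc 1 n,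
          (∑ σ ∈ surjs (m+k) i, idTens (sop n k) f (y ∘ σ)) / i.factorial := by
        rw [show olsonT m n f i y = ∑ k ∈ Finset.Icc 1 n,
          Sop (k+m) i (castFun (Nat.add_comm m k) (symmFun (m+k) (idTens (sop n k) f))) y
          from rfl]
        exact Finset.sum_congr rfl (fun k _ => L1 k i _ y)
    _ = ∑ k ∈ Finset.Icc 1 n, (∑ σ ∈ surjs (m+k) i,
          (fun (A : Fin m → Fin i) (B : Fin k → Fin i) => (-1:ℝ)^(n-k) / (k.factorial) *
            ∑ h ∈ surjs n k, (∏ j, ((fiberCard h j - 1).factorial : ℝ)) *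
              f (Fin.append (fun s => y (A s)) (fun t => y (B (h t)))))
            (fun s => σ (Fin.castAdd k s)) (fun t => σ (Fin.natAdd m t))) / i.factorial := by
        refine Finset.sum_congr rfl (fun k _ => ?_)
        congr 1
        refine Finset.sum_congr rfl (fun σ _ => ?_)
        exact L2 k f (y ∘ σ)
    _ = ∑ k ∈ Finset.Icc 1 n, (∑ A : Fin m → Fin i, ∑ B : Fin k → Fin i,
          if (∀ t, (∃ s, A s = t) ∨ (∃ s, B s = t)) then ((-1:ℝ)^(n-k) / k.factorial *
            ∑ h ∈ surjs n k, (∏ j, ((fiberCard h j - 1).factorial:ℝ)) *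
              f (Fin.append (fun s => y (A s)) (fun t => y (B (h t))))) else 0) / i.factorial := by
        refine Finset.sum_congr rfl (fun k _ => ?_)
        congr 1
        exact L3 (fun (A : Fin m → Fin i) (B : Fin k → Fin i) =>
          (-1:ℝ)^(n-k) / (k.factorial) *
            ∑ h ∈ surjs n k, (∏ j, ((fiberCard h j - 1).factorial : ℝ)) *
              f (Fin.append (fun s => y (A s)) (fun t => y (B (h t)))))
    _ = ∑ k ∈ Finset.Icc 1 n, (∑ A : Fin m → Fin i, ∑ ψ : Fin n → Fin i,
          if (∀ t, (∃ s, A s = t) ∨ (∃ s, ψ s = t)) then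
            (((-1:ℝ)^(n-k) / k.factorial) * ∑ h ∈ surjs n k,
              (if (∀ a b, h a = h b → ψ a = ψ b)
                then (∏ j, ((fiberCard h j - 1).factorial:ℝ)) else 0))
            * f (Fin.append (fun s => y (A s)) (fun t => y (ψ t))) else 0) / i.factorial := by
        refine Finset.sum_congr rfl (fun k hk => ?_)
        congr 1
        refine Finset.sum_congr rfl (fun A _ => ?_)
        exact L4 (Finset.mem_Icc.1 hk).1 A _ _
          (fun ψ => f (Fin.append (fun s => y (A s)) (fun t => y (ψ t))))
    _ = (∑ A : Fin m → Fin i, ∑ ψ : Fin n → Fin i,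
          if ((∀ t, (∃ s, A s = t) ∨ (∃ s, ψ s = t)) ∧ Function.Injective ψ)
          then f (Fin.append (fun s => y (A s)) (fun t => y (ψ t))) else 0) / i.factorial := by
        rw [← Finset.sum_div]
        congr 1
        rw [Finset.sum_comm]
        refine Finset.sum_congr rfl (fun A _ => ?_)
        rw [Finset.sum_comm]
        refine Finset.sum_congr rfl (fun ψ _ => ?_)
        by_cases hcov : ∀ t, (∃ s, A s = t) ∨ (∃ s, ψ s = t)
        · simp only [if_pos hcov]
          rw [← Finset.sum_mul]
          have hkey : (∑ k ∈ Finset.Icc 1 n, ((-1:ℝ)^(n-k)/(k.factorial) * ∑ h ∈ surjs n k,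
              (if (∀ a b, h a = h b → ψ a = ψ b)
                then (∏ j, ((fiberCard h j - 1).factorial:ℝ)) else 0)))
              = if Function.Injective ψ then (1:ℝ) else 0 := S_key_Icc hn ψ
          rw [hkey]
          by_cases hinj : Function.Injective ψ
          · rw [if_pos hinj, if_pos ⟨hcov, hinj⟩, one_mul]
          · rw [if_neg hinj, if_neg (fun hc => hinj hc.2), zero_mul]
        · simp only [if_neg hcov, if_neg (fun hc : _ ∧ _ => hcov hc.1)]
          exact Finset.sum_const_zero


/-- Infinite-dimensional Olson's identity, vanishing and diagonal cases:
with `l = m+n` and `f : X^l → ℝ` symmetric, (a) `T_i f = 0` whenever `i < n` or `i > l`;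
(b) `(T_n f)(x₁,…,x_n) = Σ_{j₁,…,j_m=1}^{n} f(x₁,…,x_n, x_{j₁},…,x_{j_m})`. -/
theorem olson_identity
    {X : Type*} [Fintype X] [DecidableEq X] {m n : ℕ} (hm : 1 ≤ m) (hn : 1 ≤ n)
    (f : (Fin (m + n) → X) → ℝ) (hf : IsSymmFun f) :
    (∀ i : ℕ, 1 ≤ i → (i < n ∨ m + n < i) → ∀ y : Fin i → X, olsonT m n f i y = 0)
    ∧ (∀ x : Fin n → X,
        olsonT m n f n x
          = ∑ j : Fin m → Fin n,
              f (fun t => Fin.append x (fun s => x (j s)) (Fin.cast (Nat.add_comm m n) t))) := by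
  classical
  constructor
  · intro i _ hcase y
    rw [olsonT_eq hn f i y]
    have hzero : ∀ A : Fin m → Fin i, ∀ ψ : Fin n → Fin i,
        (if ((∀ t, (∃ s, A s = t) ∨ (∃ s, ψ s = t)) ∧ Function.Injective ψ)
        then f (Fin.append (fun s => y (A s)) (fun t => y (ψ t))) else 0) = 0 := by
      intro A ψ
      rw [if_neg]
      rintro ⟨hcov, hinj⟩
      rcases hcase with hlt | hgt
      · have := Fintype.card_le_of_injective ψ hinj
        simp only [Fintype.card_fin] at this
        omega
      · have hsurj : Function.Surjective (Sum.elim A ψ) := by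
          intro t
          rcases hcov t with ⟨s, hs⟩ | ⟨s, hs⟩
          · exact ⟨Sum.inl s, hs⟩
          · exact ⟨Sum.inr s, hs⟩
        have := Fintype.card_le_of_surjective _ hsurj
        simp only [Fintype.card_fin, Fintype.card_sum] at this
        omega
    rw [Finset.sum_congr rfl (fun A _ => Finset.sum_congr rfl (fun ψ _ => hzero A ψ))]
    simp
  · intro x
    rw [olsonT_eq hn f n x]
    have e1 : ∀ A : Fin m → Fin n, ∀ ψ : Fin n → Fin n,
        (if ((∀ t, (∃ s, A s = t) ∨ (∃ s, ψ s = t)) ∧ Function.Injective ψ)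
          then f (Fin.append (fun s => x (A s)) (fun t => x (ψ t))) else 0)
        = (if Function.Injective ψ
          then f (Fin.append (fun s => x (A s)) (fun t => x (ψ t))) else 0) := by
      intro A ψ
      by_cases hinj : Function.Injective ψ
      · rw [if_pos hinj,
          if_pos ⟨fun t => Or.inr (Finite.injective_iff_surjective.1 hinj t), hinj⟩]
      · rw [if_neg hinj, if_neg (fun hc => hinj hc.2)]
    rw [Finset.sum_congr rfl (fun A _ => Finset.sum_congr rfl (fun ψ _ => e1 A ψ))]
    have e2 : ∀ A : Fin m → Fin n,
        ∑ ψ : Fin n → Fin n, (if Function.Injective ψ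
          then f (Fin.append (fun s => x (A s)) (fun t => x (ψ t))) else 0)
        = (n.factorial : ℝ) * f (Fin.append (fun s => x (A s)) (fun t => x t)) := by
      intro A
      have e2a : ∑ ψ : Fin n → Fin n, (if Function.Injective ψ
            then f (Fin.append (fun s => x (A s)) (fun t => x (ψ t))) else 0)
          = ∑ e : Equiv.Perm (Fin n),
              f (Fin.append (fun s => x (A s)) (fun t => x (e t))) := by
        rw [← Finset.sum_filter]
        symm
        apply Finset.sum_bij (i := fun (e : Equiv.Perm (Fin n)) _ => (⇑e : Fin n → Fin n))
        · intro e _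
          rw [Finset.mem_filter]
          exact ⟨Finset.mem_univ _, e.injective⟩
        · intro e _ e' _ h
          exact Equiv.coe_fn_injective h
        · intro ψ hψ
          rw [Finset.mem_filter] at hψ
          exact ⟨Equiv.ofBijective ψ (Finite.injective_iff_bijective.1 hψ.2),
            Finset.mem_univ _, rfl⟩
        · intro e _
          rfl
      rw [e2a]
      have e2b : ∀ e : Equiv.Perm (Fin n),
          f (Fin.append (fun s => x (A s)) (fun t => x (e t)))
          = f (Fin.append (fun s => x (A s)) (fun t => x t)) := by
        intro e
        set ρ : Equiv.Perm (Fin (m+n)) :=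
          (finSumFinEquiv.symm.trans
            ((Equiv.sumCongr (Equiv.refl (Fin m)) e).trans finSumFinEquiv)) with hρdef
        have hρ := hf ρ (Fin.append (fun s => x (A s)) (fun t => x t))
        rw [← hρ]
        congr 1
        funext b
        cases b using Fin.addCases with
        | left s =>
          simp [hρdef, Function.comp, finSumFinEquiv_symm_apply_castAdd,
            finSumFinEquiv_apply_left, Fin.append_left]
        | right t =>
          simp [hρdef, Function.comp, finSumFinEquiv_symm_apply_natAdd,
            finSumFinEquiv_apply_right, Fin.append_right]
      rw [Finset.sum_congr rfl (fun e _ => e2b e), Finset.sum_const]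
      rw [Finset.card_univ, Fintype.card_perm, Fintype.card_fin, nsmul_eq_mul]
    rw [Finset.sum_congr rfl (fun A _ => e2 A), ← Finset.mul_sum,
      mul_div_cancel_left₀ _ (Nat.cast_ne_zero.2 (Nat.factorial_ne_zero n) : ((n.factorial : ℝ) ≠ 0))]
    apply Finset.sum_congr rfl
    intro j _
    set u : Fin (m+n) → X :=
      fun t => Fin.append x (fun s => x (j s)) (Fin.cast (Nat.add_comm m n) t) with hu
    set ρ₂ : Equiv.Perm (Fin (m+n)) :=
      (finSumFinEquiv.symm.trans ((Equiv.sumComm (Fin m) (Fin n)).trans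
        (finSumFinEquiv.trans (finCongr (Nat.add_comm n m))))) with hρ₂
    have hfa := hf ρ₂ u
    rw [← hfa]
    congr 1
    funext b
    cases b using Fin.addCases with
    | left s =>
      simp only [Function.comp_apply, Fin.append_left]
      have hb : ρ₂ (Fin.castAdd n s) = Fin.cast (Nat.add_comm n m) (Fin.natAdd n s) := by
        simp [hρ₂, finSumFinEquiv_symm_apply_castAdd, finSumFinEquiv_apply_right]
      rw [hb, hu]
      show x (j s) = Fin.append x (fun s => x (j s))
        (Fin.cast (Nat.add_comm m n) (Fin.cast (Nat.add_comm n m) (Fin.natAdd n s)))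
      have : (Fin.cast (Nat.add_comm m n) (Fin.cast (Nat.add_comm n m) (Fin.natAdd n s)))
          = Fin.natAdd n s := rfl
      rw [this, Fin.append_right]
    | right t =>
      simp only [Function.comp_apply, Fin.append_right]
      have hb : ρ₂ (Fin.natAdd m t) = Fin.cast (Nat.add_comm n m) (Fin.castAdd m t) := by
        simp [hρ₂, finSumFinEquiv_symm_apply_natAdd, finSumFinEquiv_apply_left]
      rw [hb, hu]
      show x t = Fin.append x (fun s => x (j s))
        (Fin.cast (Nat.add_comm m n) (Fin.cast (Nat.add_comm n m) (Fin.castAdd m t)))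
      have : (Fin.cast (Nat.add_comm m n) (Fin.cast (Nat.add_comm n m) (Fin.castAdd m t)))
          = Fin.castAdd m t := rfl
      rw [this, Fin.append_left]
end

section
/- (Generating function for the Stirling operators of the second kind.) For a finite set X, every ξ : X → ℝ, every k ≥ 1, and every n ≥ k, the function S(n,k)(ξ^{⊗n}) on X^k equals the coefficient extraction: (n!/k!) times the degree-n part (in ξ, graded by total degree in the entries of ξ) of the symmetric tensor (e^{ξ}−1)^{⊗k}; concretely, S(n,k)(ξ^{⊗n}) = (n!/k!) Σ_{(i₁,…,i_k)∈ℕ_{≥1}^k, i₁+⋯+i_k=n} (1/(i₁!⋯i_k!)) · Sym(ξ^{i₁} ⊗ ⋯ ⊗ ξ^{i_k}), where ξ^{i}(x) = ξ(x)^{i} and Sym denotes symmetrization in the k variables. -/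
open Finset

section Aux

open Finset

lemma fiberCard_eq_sum {n k : ℕ} (g : Fin n → Fin k) (j : Fin k) :
    fiberCard g j = ∑ t : Fin n, if g t = j then 1 else 0 := by
  unfold fiberCard
  rw [Finset.card_filter]

lemma fiberCard_cons {n k : ℕ} (a : Fin k) (g : Fin n → Fin k) (j : Fin k) :
    fiberCard (Fin.cons a g) j = (if a = j then 1 else 0) + fiberCard g j := by
  rw [fiberCard_eq_sum, fiberCard_eq_sum, Fin.sum_univ_succ]
  simp only [Fin.cons_zero, Fin.cons_succ]

lemma sum_fiberCard {n k : ℕ} (g : Fin n → Fin k) :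
    ∑ j, fiberCard g j = n := by
  classical
  have h := Finset.card_eq_sum_card_fiberwise
    (f := g) (s := (Finset.univ : Finset (Fin n))) (t := Finset.univ)
    (fun x _ => Finset.mem_univ _)
  simpa [fiberCard] using h.symm

lemma surj_iff_fiberCard {n k : ℕ} (g : Fin n → Fin k) :
    Function.Surjective g ↔ ∀ j, 1 ≤ fiberCard g j := by
  constructor
  · intro h j
    obtain ⟨t, ht⟩ := h j
    exact Finset.card_pos.mpr ⟨t, by simp [ht]⟩
  · intro h j
    obtain ⟨t, ht⟩ := Finset.card_pos.mp (h j)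
    exact ⟨t, (Finset.mem_filter.mp ht).2⟩

lemma prod_comp_fiberCard {n k : ℕ} (c : Fin k → ℝ) (g : Fin n → Fin k) :
    ∏ t, c (g t) = ∏ j, c j ^ fiberCard g j := by
  classical
  rw [← Finset.prod_fiberwise_of_maps_to (fun x (_ : x ∈ univ) => mem_univ (g x))
    (fun t => c (g t))]
  refine Finset.prod_congr rfl fun j _ => ?_
  rw [Finset.prod_congr rfl (fun t ht => by rw [(mem_filter.1 ht).2] : ∀ t ∈ _, c (g t) = c j),
    prod_const]
  rfl

lemma count_mul_factorial :
    ∀ (n : ℕ) {k : ℕ} (i : Fin k → ℕ), (∑ j, i j) = n →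
    ((Finset.univ.filter (fun g : Fin n → Fin k => ∀ j, fiberCard g j = i j)).card : ℝ)
      * ∏ j, ((i j).factorial : ℝ) = (n.factorial : ℝ) := by
  intro n
  induction n with
  | zero =>
    intro k i hi
    have hz : ∀ j, i j = 0 := fun j =>
      Finset.sum_eq_zero_iff.mp hi j (mem_univ j)
    have h0 : ∀ g : Fin 0 → Fin k, ∀ j, fiberCard g j = i j := by
      intro g j
      simp [fiberCard, hz j, Finset.filter_eq_empty_iff]
    rw [Finset.filter_true_of_mem (fun g _ => h0 g)]
    simp [hz, Fintype.card_fun]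
  | succ n ih =>
    intro k i hi
    classical
    -- split off the first coordinate
    have hcard : (Finset.univ.filter
          (fun g : Fin (n+1) → Fin k => ∀ j, fiberCard g j = i j)).card
        = ∑ a : Fin k, (Finset.univ.filter
            (fun g' : Fin n → Fin k =>
              ∀ j, (if a = j then 1 else 0) + fiberCard g' j = i j)).card := by
      simp only [Finset.card_filter]
      rw [← (Fin.consEquiv (fun _ : Fin (n+1) => Fin k)).sum_comp
        (fun g => if (∀ j, fiberCard g j = i j) then (1:ℕ) else 0)]
      rw [Fintype.sum_prod_type]
      refine Finset.sum_congr rfl fun a _ => Finset.sum_congr rfl fun g' _ => ?_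
      simp only [Fin.consEquiv, Equiv.coe_fn_mk, fiberCard_cons]
    have key : ∀ a : Fin k,
        ((Finset.univ.filter
            (fun g' : Fin n → Fin k =>
              ∀ j, (if a = j then 1 else 0) + fiberCard g' j = i j)).card : ℝ)
          * ∏ j, ((i j).factorial : ℝ) = (i a : ℝ) * (n.factorial : ℝ) := by
      intro a
      by_cases h1 : 1 ≤ i a
      · have hcond : ∀ g' : Fin n → Fin k,
            (∀ j, (if a = j then 1 else 0) + fiberCard g' j = i j)
              ↔ (∀ j, fiberCard g' j = i j - (if a = j then 1 else 0)) := by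
          intro g'
          constructor <;> intro h j <;> have hj := h j <;> clear h <;> by_cases haj : a = j
          · subst haj; rw [if_pos rfl] at hj ⊢; omega
          · rw [if_neg haj] at hj ⊢; omega
          · subst haj; rw [if_pos rfl] at hj ⊢; omega
          · rw [if_neg haj] at hj ⊢; omega
        have hsum : ∑ j, (i j - if a = j then 1 else 0) = n := by
          have e2 : i a + ∑ j ∈ univ.erase a, i j = n + 1 := by
            rw [Finset.add_sum_erase _ i (mem_univ a), hi]
          have e1 : ∑ j, (i j - if a = j then 1 else 0)
              = (i a - 1) + ∑ j ∈ univ.erase a, (i j - if a = j then 1 else 0) := by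
            rw [← Finset.add_sum_erase univ
              (fun j => i j - if a = j then 1 else 0) (mem_univ a)]
            simp
          have e3 : ∑ j ∈ univ.erase a, (i j - if a = j then 1 else 0)
              = ∑ j ∈ univ.erase a, i j :=
            Finset.sum_congr rfl fun j hj => by
              rw [if_neg (Ne.symm (Finset.mem_erase.mp hj).1), Nat.sub_zero]
          omega
        have hfact : (∏ j, ((i j).factorial : ℝ))
            = (i a : ℝ) * ∏ j, (((i j - if a = j then 1 else 0)).factorial : ℝ) := by
          rw [← Finset.mul_prod_erase univ (fun j => ((i j).factorial : ℝ)) (mem_univ a),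
            ← Finset.mul_prod_erase univ
              (fun j => (((i j - if a = j then 1 else 0)).factorial : ℝ)) (mem_univ a)]
          have e3 : ∏ j ∈ univ.erase a, (((i j - if a = j then 1 else 0)).factorial : ℝ)
              = ∏ j ∈ univ.erase a, ((i j).factorial : ℝ) :=
            Finset.prod_congr rfl fun j hj => by
              rw [if_neg (Ne.symm (Finset.mem_erase.mp hj).1), Nat.sub_zero]
          have e4 : (i a).factorial = i a * (i a - if a = a then 1 else 0).factorial := by
            rw [if_pos rfl, ← Nat.mul_factorial_pred (Nat.one_le_iff_ne_zero.mp h1)]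
          rw [e3, e4]
          push_cast
          ring
        have hfe : (Finset.univ.filter
              (fun g' : Fin n → Fin k =>
                ∀ j, (if a = j then 1 else 0) + fiberCard g' j = i j))
            = Finset.univ.filter
              (fun g' : Fin n → Fin k =>
                ∀ j, fiberCard g' j = i j - (if a = j then 1 else 0)) :=
          Finset.filter_congr (fun g' _ => hcond g')
        have hih := ih (fun j => i j - if a = j then 1 else 0) hsum
        rw [hfe, hfact]
        calc ((Finset.univ.filter
              (fun g' : Fin n → Fin k =>
                ∀ j, fiberCard g' j = i j - (if a = j then 1 else 0))).card : ℝ)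
              * ((i a : ℝ) * ∏ j, (((i j - if a = j then 1 else 0)).factorial : ℝ))
            = (i a : ℝ) * (((Finset.univ.filter
              (fun g' : Fin n → Fin k =>
                ∀ j, fiberCard g' j = i j - (if a = j then 1 else 0))).card : ℝ)
              * ∏ j, (((i j - if a = j then 1 else 0)).factorial : ℝ)) := by ring
          _ = (i a : ℝ) * (n.factorial : ℝ) := by rw [hih]
      · have hia : i a = 0 := by omega
        have hempty : (Finset.univ.filter
            (fun g' : Fin n → Fin k =>
              ∀ j, (if a = j then 1 else 0) + fiberCard g' j = i j)) = ∅ := by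
          refine Finset.filter_eq_empty_iff.mpr fun {g'} _ h => ?_
          have := h a
          simp [hia] at this
        rw [hempty, hia]
        simp
    rw [hcard]
    push_cast
    rw [Finset.sum_mul, Finset.sum_congr rfl (fun a _ => key a)]
    rw [← Finset.sum_mul]
    rw [show (∑ a, (i a : ℝ)) = ((n : ℝ) + 1) by rw [← Nat.cast_sum, hi]; push_cast; ring]
    rw [Nat.factorial_succ]
    push_cast
    ring

end Aux


section Main

open Finset

variable {X : Type*} [Fintype X] [DecidableEq X]

lemma main_proof {k n : ℕ} (ξ : X → ℝ) (y : Fin k → X) :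
    Sop n k (fun v : Fin n → X => ∏ t, ξ (v t)) y
      = ((n.factorial : ℝ) / (k.factorial : ℝ)) *
          ∑ i ∈ (Finset.Nat.antidiagonalTuple k n).filter (fun i => ∀ j, 1 ≤ i j),
            (1 / ∏ j, ((i j).factorial : ℝ)) *
              ((∑ π : Equiv.Perm (Fin k), ∏ j, ξ (y (π j)) ^ (i j)) / (k.factorial : ℝ)) := by
  classical
  set c : Fin k → ℝ := fun j => ξ (y j) with hc
  set S := (Finset.Nat.antidiagonalTuple k n).filter (fun i => ∀ j, 1 ≤ i j) with hS
  have hmaps : ∀ g ∈ surjs n k, (fun j => fiberCard g j) ∈ S := by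
    intro g hg
    rw [hS, Finset.mem_filter]
    have hsurj : Function.Surjective g := by simpa [surjs] using hg
    exact ⟨Finset.Nat.mem_antidiagonalTuple.mpr (sum_fiberCard g),
      (surj_iff_fiberCard g).mp hsurj⟩
  -- Step A : group the sum over surjections by the fiber-count vector
  have hA : ∑ g ∈ surjs n k, ∏ t, ξ (y (g t))
      = ∑ i ∈ S, ((Finset.univ.filter
            (fun g : Fin n → Fin k => ∀ j, fiberCard g j = i j)).card : ℝ)
          * ∏ j, c j ^ i j := by
    rw [← Finset.sum_fiberwise_of_maps_to hmaps (fun g => ∏ t, ξ (y (g t)))]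
    refine Finset.sum_congr rfl fun i hi => ?_
    have hi1 : ∀ j, 1 ≤ i j := (Finset.mem_filter.mp hi).2
    have hfilter : (surjs n k).filter (fun g => (fun j => fiberCard g j) = i)
        = Finset.univ.filter (fun g : Fin n → Fin k => ∀ j, fiberCard g j = i j) := by
      ext g
      simp only [surjs, Finset.filter_filter, Finset.mem_filter, Finset.mem_univ, true_and]
      constructor
      · rintro ⟨_, hfi⟩ j
        exact congrFun hfi j
      · intro h
        refine ⟨(surj_iff_fiberCard g).mpr fun j => ?_, funext h⟩
        rw [h j]; exact hi1 j
    have hterm : ∀ g ∈ Finset.univ.filter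
        (fun g : Fin n → Fin k => ∀ j, fiberCard g j = i j),
        (∏ t, ξ (y (g t))) = ∏ j, c j ^ i j := by
      intro g hg
      have hgm : ∀ j, fiberCard g j = i j := (Finset.mem_filter.mp hg).2
      rw [show (∏ t, ξ (y (g t))) = ∏ j, c j ^ fiberCard g j from prod_comp_fiberCard c g]
      exact Finset.prod_congr rfl fun j _ => by rw [hgm j]
    rw [hfilter, Finset.sum_congr rfl hterm, Finset.sum_const, nsmul_eq_mul]
  -- Step B : each permutation contributes the same amount
  have hperm : ∀ π : Equiv.Perm (Fin k),
      (∑ i ∈ S, (1 / ∏ j, ((i j).factorial : ℝ)) * ∏ j, ξ (y (π j)) ^ i j)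
        = ∑ i ∈ S, (1 / ∏ j, ((i j).factorial : ℝ)) * ∏ j, c j ^ i j := by
    intro π
    refine Finset.sum_equiv (Equiv.arrowCongr (π : Equiv.Perm (Fin k)) (Equiv.refl ℕ))
      ?_ ?_
    · intro i
      simp only [hS, Finset.mem_filter, Finset.Nat.mem_antidiagonalTuple,
        Equiv.arrowCongr_apply, Equiv.coe_refl, Function.comp, id_eq]
      constructor
      · rintro ⟨h1, h2⟩
        refine ⟨?_, fun j => h2 _⟩
        rw [← h1]
        exact Equiv.sum_comp π.symm i
      · rintro ⟨h1, h2⟩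
        refine ⟨?_, fun j => by simpa using h2 (π j)⟩
        rw [← h1]
        exact (Equiv.sum_comp π.symm i).symm
    · intro i _
      simp only [Equiv.arrowCongr_apply, Equiv.coe_refl, Function.comp, id_eq]
      have e1 : (∏ j, ((i (π.symm j)).factorial : ℝ)) = ∏ j, ((i j).factorial : ℝ) :=
        Equiv.prod_comp π.symm (fun j => ((i j).factorial : ℝ))
      have e2 : (∏ j, c j ^ i (π.symm j)) = ∏ j, ξ (y (π j)) ^ i j := by
        rw [← Equiv.prod_comp π (fun j => c j ^ i (π.symm j))]
        exact Finset.prod_congr rfl fun j _ => by simp [hc]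
      rw [e1, e2]
  have hkf : ((k.factorial : ℝ)) ≠ 0 := Nat.cast_ne_zero.mpr (Nat.factorial_ne_zero k)
  -- Step C : assemble
  have hSop : Sop n k (fun v : Fin n → X => ∏ t, ξ (v t)) y
      = (∑ g ∈ surjs n k, ∏ t, ξ (y (g t))) / (k.factorial : ℝ) := rfl
  rw [hSop, hA]
  have hsum : (∑ i ∈ S, ((Finset.univ.filter
        (fun g : Fin n → Fin k => ∀ j, fiberCard g j = i j)).card : ℝ) * ∏ j, c j ^ i j)
      = (n.factorial : ℝ) * ∑ i ∈ S, (1 / ∏ j, ((i j).factorial : ℝ)) * ∏ j, c j ^ i j := by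
    rw [Finset.mul_sum]
    refine Finset.sum_congr rfl fun i hi => ?_
    have hin : ∑ j, i j = n :=
      Finset.Nat.mem_antidiagonalTuple.mp (Finset.mem_filter.mp hi).1
    have hp : (∏ j, ((i j).factorial : ℝ)) ≠ 0 :=
      Finset.prod_ne_zero_iff.mpr fun j _ =>
        Nat.cast_ne_zero.mpr (Nat.factorial_ne_zero _)
    have hN : ((Finset.univ.filter
        (fun g : Fin n → Fin k => ∀ j, fiberCard g j = i j)).card : ℝ)
        = (n.factorial : ℝ) / ∏ j, ((i j).factorial : ℝ) :=
      (eq_div_iff hp).mpr (count_mul_factorial n i hin)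
    rw [hN]
    field_simp
  rw [hsum]
  have hRHS : (∑ i ∈ S, (1 / ∏ j, ((i j).factorial : ℝ)) *
        ((∑ π : Equiv.Perm (Fin k), ∏ j, ξ (y (π j)) ^ (i j)) / (k.factorial : ℝ)))
      = ∑ i ∈ S, (1 / ∏ j, ((i j).factorial : ℝ)) * ∏ j, c j ^ i j := by
    calc (∑ i ∈ S, (1 / ∏ j, ((i j).factorial : ℝ)) *
          ((∑ π : Equiv.Perm (Fin k), ∏ j, ξ (y (π j)) ^ (i j)) / (k.factorial : ℝ)))
        = ∑ i ∈ S, (∑ π : Equiv.Perm (Fin k),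
            (1 / ∏ j, ((i j).factorial : ℝ)) * ∏ j, ξ (y (π j)) ^ (i j))
              / (k.factorial : ℝ) := by
          refine Finset.sum_congr rfl fun i _ => ?_
          rw [← mul_div_assoc, Finset.mul_sum]
      _ = (∑ i ∈ S, ∑ π : Equiv.Perm (Fin k),
            (1 / ∏ j, ((i j).factorial : ℝ)) * ∏ j, ξ (y (π j)) ^ (i j))
              / (k.factorial : ℝ) := (Finset.sum_div _ _ _).symm
      _ = (∑ π : Equiv.Perm (Fin k), ∑ i ∈ S,
            (1 / ∏ j, ((i j).factorial : ℝ)) * ∏ j, ξ (y (π j)) ^ (i j))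
              / (k.factorial : ℝ) := by rw [Finset.sum_comm]
      _ = (∑ _π : Equiv.Perm (Fin k), ∑ i ∈ S,
            (1 / ∏ j, ((i j).factorial : ℝ)) * ∏ j, c j ^ i j)
              / (k.factorial : ℝ) := by
          rw [Finset.sum_congr rfl fun π _ => hperm π]
      _ = ∑ i ∈ S, (1 / ∏ j, ((i j).factorial : ℝ)) * ∏ j, c j ^ i j := by
          rw [Finset.sum_const, Finset.card_univ, Fintype.card_perm, Fintype.card_fin,
            nsmul_eq_mul]
          field_simp
  rw [hRHS, div_mul_eq_mul_div, mul_div_assoc]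

end Main
/-- generating function of the Stirling operators of the second kind:
`S(n,k)(ξ^{⊗n}) = (n!/k!) Σ_{i₁+⋯+i_k=n, i_j≥1} (1/(i₁!⋯i_k!)) Sym(ξ^{i₁} ⊗ ⋯ ⊗ ξ^{i_k})`. -/
theorem stirling_second_generating_function
    {X : Type*} [Fintype X] [DecidableEq X] {k n : ℕ} (hk : 1 ≤ k) (hkn : k ≤ n)
    (ξ : X → ℝ) (y : Fin k → X) :
    Sop n k (fun v : Fin n → X => ∏ t, ξ (v t)) y
      = ((n.factorial : ℝ) / (k.factorial : ℝ)) *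
          ∑ i ∈ (Finset.Nat.antidiagonalTuple k n).filter (fun i => ∀ j, 1 ≤ i j),
            (1 / ∏ j, ((i j).factorial : ℝ)) *
              ((∑ π : Equiv.Perm (Fin k), ∏ j, ξ (y (π j)) ^ (i j)) / (k.factorial : ℝ)) := by
  exact main_proof ξ y
end

section
/- (Infinite-dimensional Grünert formula, finite setting.) Let X be a finite set and consider the polynomial algebra P of functions of a finitely supported signed measure ω on X. For ξ : X → ℝ define the operator ⟨ω, ξ∂⟩ on P acting on monomials by ⟨ω, ξ∂⟩⟨ω^{⊗n}, f⟩ = ⟨ω^{⊗n}, N(ξ)f⟩ where (N(ξ)f)(x₁,…,x_n) = f(x₁,…,x_n)(ξ(x₁)+⋯+ξ(x_n)). Then for ξ₁,…,ξ_n : X → ℝ, the composition ⟨ω,ξ₁∂⟩⋯⟨ω,ξ_n∂⟩ applied to a monomial ⟨ω^{⊗m}, φ^{⊗m}⟩ equals Σ_{k=1}^{n} (m)_k ⟨ω^{⊗m}, ((S(n,k)(ξ₁⊙⋯⊙ξ_n))·φ^{⊗k}) ⊙ φ^{⊗(m−k)}⟩, where (m)_k is the falling factorial number m(m−1)⋯(m−k+1).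 Equivalently: ⟨ω,ξ₁∂⟩⋯⟨ω,ξ_n∂⟩ = Σ_{k=1}^{n} ⟨ω^{⊗k}, (S(n,k)(ξ₁⊙⋯⊙ξ_n))∂^{⊗k}⟩ as operators on polynomials in ω. -/
open Finset

section AuxGruenert

open Finset Function

variable {X : Type*} [Fintype X] [DecidableEq X]

/-- The basic monomial-type sum appearing after expanding the product of sums. -/
noncomputable def Tfun {n m : ℕ} (W : X → ℝ) (ξ : Fin n → X → ℝ) (f : Fin n → Fin m) : ℝ :=
  ∑ y : Fin m → X, (∏ i, W (y i)) * ∏ j, ξ j (y (f j))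

lemma Tfun_comp_inj {n m k : ℕ} (W : X → ℝ) (ξ : Fin n → X → ℝ)
    (ι ι' : Fin k → Fin m) (hι : Function.Injective ι) (hι' : Function.Injective ι')
    (g : Fin n → Fin k) :
    Tfun W ξ (ι ∘ g) = Tfun W ξ (ι' ∘ g) := by
  classical
  let e : {x : Fin m // x ∈ Set.range ι'} ≃ {x : Fin m // x ∈ Set.range ι} :=
    (Equiv.ofInjective ι' hι').symm.trans (Equiv.ofInjective ι hι)
  let τ : Equiv.Perm (Fin m) := e.extendSubtype
  have hτ : ∀ a, τ (ι' a) = ι a := by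
    intro a
    have hmem : ι' a ∈ Set.range ι' := ⟨a, rfl⟩
    have h1 : τ (ι' a) = ↑(e ⟨ι' a, hmem⟩) := Equiv.extendSubtype_apply_of_mem e (ι' a) hmem
    rw [h1]
    have h2 : (⟨ι' a, hmem⟩ : {x : Fin m // x ∈ Set.range ι'}) = Equiv.ofInjective ι' hι' a :=
      rfl
    rw [h2]
    simp [e]
  let E : (Fin m → X) ≃ (Fin m → X) :=
    { toFun := fun y => y ∘ τ
      invFun := fun y => y ∘ τ.symm
      left_inv := fun y => by ext i; simp
      right_inv := fun y => by ext i; simp }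
  unfold Tfun
  rw [← Equiv.sum_comp E (fun y => (∏ i, W (y i)) * ∏ j, ξ j (y ((ι' ∘ g) j)))]
  refine Finset.sum_congr rfl fun y _ => ?_
  show (∏ i, W (y i)) * ∏ j, ξ j (y (ι (g j)))
      = (∏ i, W (y (τ i))) * ∏ j, ξ j (y (τ (ι' (g j))))
  rw [Equiv.prod_comp τ fun i => W (y i)]
  congr 1
  refine Finset.prod_congr rfl fun j _ => ?_
  rw [hτ]

lemma card_factorizations {n m k : ℕ} (f : Fin n → Fin m)
    (hf : (Finset.image f Finset.univ).card = k) :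
    (((surjs n k) ×ˢ (Finset.univ : Finset (Fin k ↪ Fin m))).filter
        (fun p : (Fin n → Fin k) × (Fin k ↪ Fin m) => ⇑p.2 ∘ p.1 = f)).card = k.factorial := by
  classical
  set s : Finset (Fin m) := Finset.image f Finset.univ with hs
  let e := s.orderIsoOfFin hf
  let g₀ : Fin n → Fin k := fun j => e.symm ⟨f j, Finset.mem_image_of_mem f (Finset.mem_univ j)⟩
  let ι₀ : Fin k → Fin m := fun a => (e a : Fin m)
  have hι₀ : Function.Injective ι₀ := fun a b hab => e.injective (Subtype.ext hab)
  have hfact : ∀ j, ι₀ (g₀ j) = f j := by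
    intro j
    show ((e (e.symm _) : s) : Fin m) = f j
    rw [e.apply_symm_apply]
  have hg₀ : Function.Surjective g₀ := by
    intro a
    obtain ⟨j, -, hj⟩ := Finset.mem_image.mp (e a).2
    refine ⟨j, ?_⟩
    have : (⟨f j, Finset.mem_image_of_mem f (Finset.mem_univ j)⟩ : s) = e a := Subtype.ext hj
    show e.symm _ = a
    rw [this, e.symm_apply_apply]
  have hcard : (Finset.univ : Finset (Equiv.Perm (Fin k))).card
      = (((surjs n k) ×ˢ (Finset.univ : Finset (Fin k ↪ Fin m))).filter
        (fun p : (Fin n → Fin k) × (Fin k ↪ Fin m) => ⇑p.2 ∘ p.1 = f)).card := by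
    refine Finset.card_bij
      (fun σ _ => (⇑σ ∘ g₀, σ.symm.toEmbedding.trans ⟨ι₀, hι₀⟩)) ?_ ?_ ?_
    · intro σ _
      rw [Finset.mem_filter, Finset.mem_product]
      refine ⟨⟨?_, Finset.mem_univ _⟩, ?_⟩
      · rw [surjs, Finset.mem_filter]
        exact ⟨Finset.mem_univ _, σ.surjective.comp hg₀⟩
      · funext j
        show ι₀ (σ.symm (σ (g₀ j))) = f j
        rw [σ.symm_apply_apply, hfact]
    · intro σ₁ _ σ₂ _ hpair
      have h1 : ⇑σ₁ ∘ g₀ = ⇑σ₂ ∘ g₀ := congrArg Prod.fst hpair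
      ext a
      obtain ⟨j, rfl⟩ := hg₀ a
      exact congrArg Fin.val (congrFun h1 j)
    · rintro ⟨g, ι⟩ hp
      rw [Finset.mem_filter, Finset.mem_product] at hp
      obtain ⟨⟨hgsur, -⟩, hcomp⟩ := hp
      rw [surjs, Finset.mem_filter] at hgsur
      have hgs : Function.Surjective g := hgsur.2
      have hcomp' : ∀ j, ι (g j) = f j := fun j => congrFun hcomp j
      have hgdet : ∀ j j', g₀ j = g₀ j' → g j = g j' := by
        intro j j' h
        have hff : f j = f j' := by rw [← hfact j, ← hfact j', h]
        apply ι.injective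
        rw [hcomp', hcomp', hff]
      set σf : Fin k → Fin k := fun a => g (Function.surjInv hg₀ a) with hσf
      have hσg : ∀ j, σf (g₀ j) = g j := fun j =>
        hgdet _ _ (Function.surjInv_eq hg₀ (g₀ j))
      have hσsur : Function.Surjective σf := by
        intro b
        obtain ⟨j, hj⟩ := hgs b
        exact ⟨g₀ j, by rw [hσg, hj]⟩
      have hσbij : Function.Bijective σf := Finite.surjective_iff_bijective.mp hσsur
      refine ⟨Equiv.ofBijective σf hσbij, Finset.mem_univ _, ?_⟩
      have hgeq : ⇑(Equiv.ofBijective σf hσbij) ∘ g₀ = g := funext fun j => hσg j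
      have hιeq : (Equiv.ofBijective σf hσbij).symm.toEmbedding.trans ⟨ι₀, hι₀⟩ = ι := by
        have hισ : ∀ a, ι ((Equiv.ofBijective σf hσbij) a) = ι₀ a := by
          intro a
          obtain ⟨j, rfl⟩ := hg₀ a
          show ι (σf (g₀ j)) = ι₀ (g₀ j)
          rw [hσg, hcomp', hfact]
        refine Function.Embedding.ext fun x => ?_
        simp only [Function.Embedding.trans_apply, Equiv.coe_toEmbedding,
          Function.Embedding.coeFn_mk]
        conv_rhs => rw [← (Equiv.ofBijective σf hσbij).apply_symm_apply x]
        rw [hισ]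
      rw [Prod.mk.injEq]
      exact ⟨hgeq, hιeq⟩
  rw [← hcard, Finset.card_univ, Fintype.card_perm, Fintype.card_fin]

lemma count_sum {n m : ℕ} (k : ℕ) (T : (Fin n → Fin m) → ℝ) :
    ∑ g ∈ surjs n k, ∑ ι : Fin k ↪ Fin m, T (⇑ι ∘ g)
      = ∑ f ∈ Finset.univ.filter (fun f : Fin n → Fin m =>
          (Finset.image f Finset.univ).card = k), (k.factorial : ℝ) * T f := by
  classical
  rw [← Finset.sum_product' (s := surjs n k) (t := (Finset.univ : Finset (Fin k ↪ Fin m)))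
      (f := fun g ι => T (⇑ι ∘ g))]
  rw [← Finset.sum_fiberwise_of_maps_to (g := fun p : (Fin n → Fin k) × (Fin k ↪ Fin m) =>
      ⇑p.2 ∘ p.1) (t := Finset.univ.filter (fun f : Fin n → Fin m =>
        (Finset.image f Finset.univ).card = k))
      (f := fun p : (Fin n → Fin k) × (Fin k ↪ Fin m) => T (⇑p.2 ∘ p.1)) ?_]
  · refine Finset.sum_congr rfl fun f hf => ?_
    have hff := (Finset.mem_filter.mp hf).2
    have hconst : ∀ p ∈ ((surjs n k) ×ˢ (Finset.univ : Finset (Fin k ↪ Fin m))).filter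
        (fun p : (Fin n → Fin k) × (Fin k ↪ Fin m) => ⇑p.2 ∘ p.1 = f),
        T (⇑p.2 ∘ p.1) = T f := by
      intro p hp
      rw [(Finset.mem_filter.mp hp).2]
    rw [Finset.sum_congr rfl hconst, Finset.sum_const, card_factorizations f hff,
      nsmul_eq_mul]
  · rintro ⟨g, ι⟩ hp
    rw [Finset.mem_product] at hp
    have hgs : Function.Surjective g := (Finset.mem_filter.mp hp.1).2
    rw [Finset.mem_filter]
    refine ⟨Finset.mem_univ _, ?_⟩
    show (Finset.image (⇑ι ∘ g) Finset.univ).card = k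
    rw [← Finset.image_image, Finset.image_univ_of_surjective hgs,
      Finset.card_image_of_injective _ ι.injective, Finset.card_univ, Fintype.card_fin]

lemma pairing_symmFun (m : ℕ) (ω : X → ℝ) (K : (Fin m → X) → ℝ) :
    pairing m (prodMeas ω m) (symmFun m K) = pairing m (prodMeas ω m) K := by
  unfold pairing symmFun prodMeas
  have hstep : ∀ y : Fin m → X,
      (∏ i, ω (y i)) * ((∑ π : Equiv.Perm (Fin m), K (y ∘ π)) / m.factorial)
        = (∑ π : Equiv.Perm (Fin m), (∏ i, ω (y i)) * K (y ∘ π)) / m.factorial := by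
    intro y; rw [← mul_div_assoc, Finset.mul_sum]
  simp_rw [hstep]
  rw [← Finset.sum_div, Finset.sum_comm]
  have h1 : ∀ π : Equiv.Perm (Fin m),
      ∑ y : Fin m → X, (∏ i, ω (y i)) * K (y ∘ π)
        = ∑ y : Fin m → X, (∏ i, ω (y i)) * K y := by
    intro π
    let E : (Fin m → X) ≃ (Fin m → X) :=
      { toFun := fun y => y ∘ π
        invFun := fun y => y ∘ π.symm
        left_inv := fun y => by ext i; simp
        right_inv := fun y => by ext i; simp }
    rw [← Equiv.sum_comp E (fun y => (∏ i, ω (y i)) * K y)]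
    refine Finset.sum_congr rfl fun y _ => ?_
    show (∏ i, ω (y i)) * K (y ∘ ⇑π) = (∏ i, ω (y (π i))) * K (y ∘ ⇑π)
    rw [Equiv.prod_comp π fun i => ω (y i)]
  simp_rw [h1]
  rw [Finset.sum_const, Finset.card_univ, Fintype.card_perm, Fintype.card_fin, nsmul_eq_mul,
    mul_div_cancel_left₀ _ (Nat.cast_ne_zero.mpr m.factorial_ne_zero)]

lemma Sop_symmFun {n k : ℕ} (P : (Fin n → X) → ℝ) (z : Fin k → X) :
    Sop n k (symmFun n P) z = (∑ g ∈ surjs n k, P (z ∘ g)) / k.factorial := by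
  unfold Sop symmFun
  have h1 : ∀ π : Equiv.Perm (Fin n),
      ∑ g ∈ surjs n k, P ((z ∘ g) ∘ π) = ∑ g ∈ surjs n k, P (z ∘ g) := by
    intro π
    refine Finset.sum_nbij' (fun g => g ∘ π) (fun g => g ∘ ⇑π.symm) ?_ ?_ ?_ ?_ ?_
    · intro g hg
      rw [surjs, Finset.mem_filter] at hg ⊢
      exact ⟨Finset.mem_univ _, hg.2.comp π.surjective⟩
    · intro g hg
      rw [surjs, Finset.mem_filter] at hg ⊢
      exact ⟨Finset.mem_univ _, hg.2.comp π.symm.surjective⟩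
    · intro g _; funext j; simp
    · intro g _; funext j; simp
    · intro g _; rfl
  congr 1
  rw [← Finset.sum_div, Finset.sum_comm]
  simp_rw [h1]
  rw [Finset.sum_const, Finset.card_univ, Fintype.card_perm, Fintype.card_fin, nsmul_eq_mul]
  exact mul_div_cancel_left₀ _ (Nat.cast_ne_zero.mpr n.factorial_ne_zero)

lemma descFactorial_cast {m k : ℕ} (h : k ≤ m) :
    (∏ t ∈ Finset.range k, ((m : ℝ) - (t : ℝ))) = (m.descFactorial k : ℝ) := by
  rw [Nat.descFactorial_eq_prod_range, Nat.cast_prod]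
  refine Finset.prod_congr rfl fun t ht => ?_
  rw [Nat.cast_sub (le_of_lt (lt_of_lt_of_le (Finset.mem_range.mp ht) h))]

end AuxGruenert

/-- Infinite-dimensional Grünert formula, finite setting:
the operator `⟨ω,ξ∂⟩` acts on a monomial `⟨ω^{⊗m}, f⟩` by multiplying the kernel by
`ξ(x₁)+⋯+ξ(x_m)`; hence the composition `⟨ω,ξ₁∂⟩⋯⟨ω,ξ_n∂⟩` applied to `⟨ω^{⊗m}, φ^{⊗m}⟩`
is the monomial with kernel `φ^{⊗m}·∏_j(Σ_i ξ_j(x_i))`, and this equals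
`Σ_{k=1}^{n} (m)_k ⟨ω^{⊗m}, ((S(n,k)(ξ₁⊙⋯⊙ξ_n))·φ^{⊗k}) ⊙ φ^{⊗(m−k)}⟩`. -/
theorem gruenert_formula
    {X : Type*} [Fintype X] [DecidableEq X] {n : ℕ} (hn : 1 ≤ n) (m : ℕ)
    (ω φ : X → ℝ) (ξ : Fin n → X → ℝ) :
    pairing m (prodMeas ω m)
        (fun y => (∏ i, φ (y i)) * ∏ j : Fin n, (∑ i : Fin m, ξ j (y i)))
      = ∑ k ∈ Finset.Icc 1 n,
          (∏ t ∈ Finset.range k, ((m : ℝ) - (t : ℝ))) *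
            pairing m (prodMeas ω m)
              (symmFun m (fun y =>
                (if h : k ≤ m then
                    Sop n k (symmFun n (fun v => ∏ j, ξ j (v j)))
                      (fun a => y (Fin.castLE h a))
                  else 0) * ∏ i, φ (y i))) := by
  classical
  set W : X → ℝ := fun x => ω x * φ x with hW
  have hL : pairing m (prodMeas ω m)
      (fun y => (∏ i, φ (y i)) * ∏ j : Fin n, (∑ i : Fin m, ξ j (y i)))
      = ∑ f : Fin n → Fin m, Tfun W ξ f := by
    unfold pairing prodMeas Tfun
    have hy : ∀ y : Fin m → X,
        (∏ i, ω (y i)) * ((∏ i, φ (y i)) * ∏ j : Fin n, (∑ i : Fin m, ξ j (y i)))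
          = ∑ f : Fin n → Fin m, (∏ i, W (y i)) * ∏ j, ξ j (y (f j)) := by
      intro y
      rw [Finset.prod_univ_sum (fun _ : Fin n => (Finset.univ : Finset (Fin m)))
        (fun j i => ξ j (y i)), Fintype.piFinset_univ, Finset.mul_sum, Finset.mul_sum]
      refine Finset.sum_congr rfl fun f _ => ?_
      rw [← mul_assoc, ← Finset.prod_mul_distrib]
    simp_rw [hy]
    exact Finset.sum_comm
  rw [hL]
  rw [← Finset.sum_fiberwise_of_maps_to
      (g := fun f : Fin n → Fin m => (Finset.image f Finset.univ).card)
      (t := Finset.Icc 1 n) ?_ (fun f => Tfun W ξ f)]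
  swap
  · intro f _
    rw [Finset.mem_Icc]
    constructor
    · have hne : (Finset.univ : Finset (Fin n)).Nonempty := ⟨⟨0, hn⟩, Finset.mem_univ _⟩
      exact Finset.card_pos.mpr (hne.image f)
    · exact le_trans Finset.card_image_le (by simp)
  refine Finset.sum_congr rfl fun k hk => ?_
  by_cases hkm : k ≤ m
  · -- main case
    have hemb : ∀ g : Fin n → Fin k,
        ∑ ι : Fin k ↪ Fin m, Tfun W ξ (⇑ι ∘ g)
          = (m.descFactorial k : ℝ) * Tfun W ξ (Fin.castLE hkm ∘ g) := by
      intro g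
      have hconst : ∀ ι : Fin k ↪ Fin m, Tfun W ξ (⇑ι ∘ g) = Tfun W ξ (Fin.castLE hkm ∘ g) :=
        fun ι => Tfun_comp_inj W ξ ι (Fin.castLE hkm) ι.injective (Fin.castLE_injective hkm) g
      rw [Finset.sum_congr rfl (fun ι _ => hconst ι), Finset.sum_const, Finset.card_univ,
        Fintype.card_embedding_eq, Fintype.card_fin, Fintype.card_fin, nsmul_eq_mul]
    have h1 := count_sum (n := n) (m := m) k (Tfun W ξ)
    rw [← Finset.mul_sum] at h1
    simp_rw [hemb] at h1
    rw [← Finset.mul_sum] at h1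
    -- h1 : descF * C = k! * S_f
    have hLk : ∑ f ∈ Finset.univ.filter (fun f : Fin n → Fin m =>
          (Finset.image f Finset.univ).card = k), Tfun W ξ f
        = (m.descFactorial k : ℝ) *
          ((∑ g ∈ surjs n k, Tfun W ξ (Fin.castLE hkm ∘ g)) / k.factorial) := by
      rw [← mul_div_assoc, h1,
        mul_div_cancel_left₀ _ (Nat.cast_ne_zero.mpr k.factorial_ne_zero)]
    have hRk : pairing m (prodMeas ω m)
        (symmFun m (fun y =>
          Sop n k (symmFun n (fun v => ∏ j, ξ j (v j))) (fun a => y (Fin.castLE hkm a)) *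
            ∏ i, φ (y i)))
        = (∑ g ∈ surjs n k, Tfun W ξ (Fin.castLE hkm ∘ g)) / k.factorial := by
      rw [pairing_symmFun]
      unfold pairing prodMeas
      have hy : ∀ y : Fin m → X,
          (∏ i, ω (y i)) * (Sop n k (symmFun n (fun v => ∏ j, ξ j (v j)))
              (fun a => y (Fin.castLE hkm a)) * ∏ i, φ (y i))
            = (∑ g ∈ surjs n k,
                (∏ i, W (y i)) * ∏ j, ξ j (y (Fin.castLE hkm (g j)))) / k.factorial := by
        intro y
        rw [Sop_symmFun, div_mul_eq_mul_div, ← mul_div_assoc]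
        congr 1
        rw [mul_comm (∑ g ∈ surjs n k, _) (∏ i, φ (y i)), ← mul_assoc, Finset.mul_sum]
        refine Finset.sum_congr rfl fun g _ => ?_
        rw [← Finset.prod_mul_distrib]
        rfl
      simp_rw [hy]
      rw [← Finset.sum_div]
      congr 1
      exact Finset.sum_comm
    simp only [dif_pos hkm]
    rw [hRk, hLk, descFactorial_cast hkm]
  · -- degenerate case k > m
    simp only [dif_neg hkm]
    have hempty : (Finset.univ.filter (fun f : Fin n → Fin m =>
        (Finset.image f Finset.univ).card = k)) = ∅ := by
      rw [Finset.filter_eq_empty_iff]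
      intro f _
      have hle : (Finset.image f Finset.univ).card ≤ m :=
        le_trans (Finset.card_le_univ _) (by simp)
      omega
    rw [hempty, Finset.sum_empty]
    have hz : pairing m (prodMeas ω m) (symmFun m (fun y => (0:ℝ) * ∏ i, φ (y i))) = 0 := by
      simp [pairing, symmFun]
    rw [hz, mul_zero]
end

section
/- Let X be a finite set, ω a finitely supported signed measure on X, and ξ, φ : X → ℝ with ⟨ω, φ⟩ ≠ 1 as needed. Then for every n ≥ 1, applying the operator ⟨ω, ξ∂⟩ n times to the function e^{⟨ω, φ⟩} yields (Σ_{k=1}^{n} ⟨ω^{⊗k}, (S(n,k)ξ^{⊗n})·φ^{⊗k}⟩)·e^{⟨ω,φ⟩}, where (S(n,k)ξ^{⊗n})·φ^{⊗k} denotes the pointwise product of the symmetric function S(n,k)ξ^{⊗n} with φ(x₁)⋯φ(x_k). -/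
open Finset

/-- The first-order differential operator `⟨ω,ξ∂⟩` on functions of the measure variable:
`(⟨ω,ξ∂⟩F)(ω) = Σ_{x∈X} ω({x})ξ(x)·(d/dt)|_{t=0} F(ω+tδ_x)`. -/
noncomputable def measDirDeriv {X : Type*} [Fintype X] [DecidableEq X]
    (ξ : X → ℝ) (F : (X → ℝ) → ℝ) : (X → ℝ) → ℝ :=
  fun ω => ∑ x, ω x * ξ x *
    deriv (fun t : ℝ => F (fun a => ω a + t * (if a = x then 1 else 0))) 0


/-! ### Auxiliary lemmas for the proof -/

section Aux

lemma fiberCard_snoc {n k : ℕ} (g : Fin n → Fin k) (j i : Fin k) :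
    fiberCard (Fin.snoc g j) i = fiberCard g i + if j = i then 1 else 0 := by
  simp only [fiberCard, Finset.card_filter]
  rw [Fin.sum_univ_castSucc]
  simp [Fin.snoc_castSucc, Fin.snoc_last]

lemma fiberCard_caseB_pivot {n k : ℕ} (g : Fin n → Fin k) (i₀ : Fin (k+1)) :
    fiberCard (Fin.snoc (fun t => i₀.succAbove (g t)) i₀ : Fin (n+1) → Fin (k+1)) i₀ = 1 := by
  simp only [fiberCard, Finset.card_filter]
  rw [Fin.sum_univ_castSucc]
  simp [Fin.snoc_castSucc, Fin.snoc_last, Fin.succAbove_ne]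

lemma fiberCard_caseB_other {n k : ℕ} (g : Fin n → Fin k) (i₀ : Fin (k+1)) (j : Fin k) :
    fiberCard (Fin.snoc (fun t => i₀.succAbove (g t)) i₀ : Fin (n+1) → Fin (k+1))
      (i₀.succAbove j) = fiberCard g j := by
  simp only [fiberCard, Finset.card_filter]
  rw [Fin.sum_univ_castSucc]
  simp [Fin.snoc_castSucc, Fin.snoc_last, Fin.succAbove_right_injective.eq_iff,
    Fin.ne_succAbove i₀ j]

lemma sum_rot {α β γ : Type*} [Fintype α] [Fintype β] [Fintype γ] (F : α → β → γ → ℝ) :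
    ∑ x : α, ∑ y : β, ∑ j : γ, F x y j = ∑ j : γ, ∑ y : β, ∑ x : α, F x y j :=
  calc ∑ x : α, ∑ y : β, ∑ j : γ, F x y j
      = ∑ x : α, ∑ j : γ, ∑ y : β, F x y j :=
        Finset.sum_congr rfl fun x _ => Finset.sum_comm
    _ = ∑ j : γ, ∑ x : α, ∑ y : β, F x y j := Finset.sum_comm
    _ = ∑ j : γ, ∑ y : β, ∑ x : α, F x y j :=
        Finset.sum_congr rfl fun j _ => Finset.sum_comm

variable {X : Type*} [Fintype X] [DecidableEq X]

set_option linter.unusedSectionVars false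

lemma prod_comp_fiber {n k : ℕ} (g : Fin n → Fin k) (F : Fin k → ℝ) :
    ∏ t, F (g t) = ∏ i, F i ^ fiberCard g i := by
  rw [← Finset.prod_fiberwise_of_maps_to (fun t _ => Finset.mem_univ (g t)) (fun t => F (g t))]
  refine Finset.prod_congr rfl fun i _ => ?_
  rw [Finset.prod_congr rfl (fun t ht => congrArg F (Finset.mem_filter.mp ht).2),
    Finset.prod_const, fiberCard]

/-- The per-surjection sum `⟨ω^{⊗k}, ∏ ξ(y_i)^{c_i} φ(y_i)⟩`. -/
noncomputable def Tg (ω ξ φ : X → ℝ) {n k : ℕ} (g : Fin n → Fin k) : ℝ :=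
  ∑ y : Fin k → X, ∏ i, (ω (y i) * ξ (y i) ^ fiberCard g i * φ (y i))

/-- Clean form of the coefficient in the statement. -/
noncomputable def Qf (ξ φ ω : X → ℝ) (n : ℕ) : ℝ :=
  ∑ k ∈ Icc 1 n, (∑ g ∈ surjs n k, Tg ω ξ φ g) / (k.factorial : ℝ)

lemma rhs_eq (ξ φ ω : X → ℝ) (n : ℕ) :
    (∑ k ∈ Finset.Icc 1 n,
        pairing k (prodMeas ω k)
          (fun y => Sop n k (fun v : Fin n → X => ∏ t, ξ (v t)) y * ∏ t, φ (y t)))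
      = Qf ξ φ ω n := by
  simp only [Qf, Tg, pairing, Sop, prodMeas]
  refine Finset.sum_congr rfl fun k _ => ?_
  simp only [Finset.sum_div]
  rw [Finset.sum_comm]
  refine Finset.sum_congr rfl fun y _ => ?_
  rw [Finset.sum_mul, Finset.mul_sum]
  refine Finset.sum_congr rfl fun g _ => ?_
  have : ∏ t, ξ (y (g t)) = ∏ i, ξ (y i) ^ fiberCard g i :=
    prod_comp_fiber g (fun i => ξ (y i))
  rw [Function.comp_def, this, div_mul_eq_mul_div, ← mul_div_assoc]
  congr 1
  rw [← Finset.prod_mul_distrib, ← Finset.prod_mul_distrib]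
  exact Finset.prod_congr rfl fun i _ => by ring

lemma Qf_one (ξ φ ω : X → ℝ) : Qf ξ φ ω 1 = ∑ x, ω x * ξ x * φ x := by
  have h1 : surjs 1 1 = {fun _ => 0} := by
    rw [surjs]
    ext g
    simp only [Finset.mem_filter, Finset.mem_univ, true_and, Finset.mem_singleton]
    constructor
    · intro _; funext t; exact Subsingleton.elim _ _
    · rintro rfl i; exact ⟨0, Subsingleton.elim _ _⟩
  have h2 : fiberCard (fun _ : Fin 1 => (0 : Fin 1)) 0 = 1 := by decide
  rw [Qf]
  rw [show Icc 1 1 = {1} from rfl, Finset.sum_singleton, h1, Finset.sum_singleton, Tg]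
  rw [Fintype.sum_equiv (Equiv.funUnique (Fin 1) X) _ (fun x => ω x * ξ x * φ x)
    (fun y => by
      rw [Fin.prod_univ_one]
      simp only [Equiv.funUnique_apply]
      rw [h2, pow_one]; rfl)]
  simp

lemma base_case (ξ φ ω : X → ℝ) :
    measDirDeriv ξ (fun η => Real.exp (∑ x, η x * φ x)) ω
      = Qf ξ φ ω 1 * Real.exp (∑ x, ω x * φ x) := by
  rw [measDirDeriv, Qf_one]
  rw [Finset.sum_mul]
  refine Finset.sum_congr rfl fun x _ => ?_
  have hfun : (fun t : ℝ => Real.exp (∑ a, (ω a + t * (if a = x then 1 else 0)) * φ a))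
      = fun t => Real.exp ((∑ a, ω a * φ a) + t * φ x) := by
    funext t
    congr 1
    simp only [add_mul]
    rw [Finset.sum_add_distrib]
    congr 1
    rw [Finset.sum_eq_single x]
    · simp
    · intro b _ hb; simp [hb]
    · simp
  have hD : HasDerivAt (fun t : ℝ => Real.exp ((∑ a, ω a * φ a) + t * φ x))
      (Real.exp ((∑ a, ω a * φ a) + 0 * φ x) * φ x) 0 := by
    simpa using (((hasDerivAt_id (0:ℝ)).mul_const (φ x)).const_add (∑ a, ω a * φ a)).exp
  rw [hfun, hD.deriv]
  ring_nf

/-- The derivative of the coefficient part. -/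
noncomputable def Dterm (ξ φ ω : X → ℝ) (n : ℕ) (x : X) : ℝ :=
  ∑ k ∈ Icc 1 n, (∑ g ∈ surjs n k, ∑ y : Fin k → X, ∑ j : Fin k,
      (∏ i ∈ Finset.univ.erase j, (ω (y i) * ξ (y i) ^ fiberCard g i * φ (y i))) *
        ((if y j = x then (1:ℝ) else 0) * ξ (y j) ^ fiberCard g j * φ (y j))) / (k.factorial : ℝ)

lemma hasDerivQ (ξ φ ω : X → ℝ) (n : ℕ) (x : X) :
    HasDerivAt (fun t : ℝ => Qf ξ φ (fun a => ω a + t * (if a = x then 1 else 0)) n)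
      (Dterm ξ φ ω n x) 0 := by
  simp only [Qf, Tg, Dterm]
  refine HasDerivAt.fun_sum fun k _ => HasDerivAt.div_const ?_ _
  refine HasDerivAt.fun_sum fun g _ => ?_
  refine HasDerivAt.fun_sum fun y _ => ?_
  have h : ∀ i : Fin k, HasDerivAt
      (fun t : ℝ => (ω (y i) + t * (if y i = x then (1:ℝ) else 0)) * ξ (y i) ^ fiberCard g i * φ (y i))
      ((if y i = x then (1:ℝ) else 0) * ξ (y i) ^ fiberCard g i * φ (y i)) 0 := by
    intro i
    simpa using ((((hasDerivAt_id (0:ℝ)).mul_const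
      (if y i = x then (1:ℝ) else 0)).const_add (ω (y i))).mul_const
      (ξ (y i) ^ fiberCard g i)).mul_const (φ (y i))
  have := HasDerivAt.fun_finset_prod (u := Finset.univ) (x := (0:ℝ))
    (f := fun (i : Fin k) (t : ℝ) =>
      (ω (y i) + t * (if y i = x then (1:ℝ) else 0)) * ξ (y i) ^ fiberCard g i * φ (y i))
    (f' := fun i => (if y i = x then (1:ℝ) else 0) * ξ (y i) ^ fiberCard g i * φ (y i))
    (fun i _ => h i)
  simpa [smul_eq_mul] using this

lemma key_deriv (ξ φ ω : X → ℝ) (n : ℕ) (x : X) :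
    deriv (fun t : ℝ => Qf ξ φ (fun a => ω a + t * (if a = x then 1 else 0)) n *
        Real.exp (∑ a, (ω a + t * (if a = x then 1 else 0)) * φ a)) 0
      = Dterm ξ φ ω n x * Real.exp (∑ a, ω a * φ a)
        + Qf ξ φ ω n * (Real.exp (∑ a, ω a * φ a) * φ x) := by
  have hE : HasDerivAt (fun t : ℝ => Real.exp (∑ a, (ω a + t * (if a = x then 1 else 0)) * φ a))
      (Real.exp (∑ a, ω a * φ a) * φ x) 0 := by
    have hfun : (fun t : ℝ => Real.exp (∑ a, (ω a + t * (if a = x then 1 else 0)) * φ a))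
        = fun t => Real.exp ((∑ a, ω a * φ a) + t * φ x) := by
      funext t
      congr 1
      simp only [add_mul]
      rw [Finset.sum_add_distrib]
      congr 1
      rw [Finset.sum_eq_single x]
      · simp
      · intro b _ hb; simp [hb]
      · simp
    rw [hfun]
    simpa using (((hasDerivAt_id (0:ℝ)).mul_const (φ x)).const_add (∑ a, ω a * φ a)).exp
  have hQ := hasDerivQ ξ φ ω n x
  have := hQ.fun_mul hE
  rw [this.deriv]
  simp

lemma sumx (ξ φ ω : X → ℝ) (n : ℕ) :
    ∑ x, ω x * ξ x * Dterm ξ φ ω n x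
      = ∑ k ∈ Icc 1 n, (∑ g ∈ surjs n k, ∑ j : Fin k, Tg ω ξ φ (Fin.snoc g j))
          / (k.factorial : ℝ) := by
  simp only [Dterm, Finset.mul_sum]
  rw [Finset.sum_comm]
  refine Finset.sum_congr rfl fun k _ => ?_
  simp only [← mul_div_assoc]
  rw [← Finset.sum_div]
  congr 1
  simp only [Finset.mul_sum]
  rw [Finset.sum_comm]
  refine Finset.sum_congr rfl fun g _ => ?_
  rw [sum_rot]
  refine Finset.sum_congr rfl fun j _ => ?_
  rw [Tg]
  refine Finset.sum_congr rfl fun y _ => ?_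
  rw [Finset.sum_eq_single (y j)]
  · rw [if_pos rfl]
    have hrhs : ∏ i, (ω (y i) * ξ (y i) ^ fiberCard (Fin.snoc g j) i * φ (y i))
        = (ω (y j) * ξ (y j) ^ (fiberCard g j + 1) * φ (y j)) *
            ∏ i ∈ Finset.univ.erase j, (ω (y i) * ξ (y i) ^ fiberCard g i * φ (y i)) := by
      rw [← Finset.mul_prod_erase _ _ (Finset.mem_univ j)]
      congr 1
      · rw [fiberCard_snoc, if_pos rfl]
      · refine Finset.prod_congr rfl fun i hi => ?_
        rw [fiberCard_snoc, if_neg (Ne.symm (Finset.ne_of_mem_erase hi)), add_zero]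
    rw [hrhs, pow_succ]
    ring
  · intro b _ hb
    rw [if_neg (Ne.symm hb)]
    ring
  · intro h
    exact absurd (Finset.mem_univ _) h

/-- Case A: surjections of `Fin (n+1)` whose restriction to `Fin n` is surjective. -/
lemma SA_eq (ω ξ φ : X → ℝ) {n k : ℕ} :
    ∑ g' ∈ (surjs (n+1) k).filter
        (fun g' => Function.Surjective (fun t : Fin n => g' t.castSucc)),
      Tg ω ξ φ g'
    = ∑ g ∈ surjs n k, ∑ j : Fin k, Tg ω ξ φ (Fin.snoc g j) := by
  rw [← Finset.sum_product']
  refine (Finset.sum_nbij' (i := fun p => Fin.snoc p.1 p.2)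
    (j := fun g' => (Fin.init g', g' (Fin.last n))) ?_ ?_ ?_ ?_ ?_).symm
  · rintro ⟨g, j⟩ hp
    rw [Finset.mem_product, mem_surjs] at hp
    rw [Finset.mem_filter, mem_surjs]
    refine ⟨fun i => ?_, ?_⟩
    · obtain ⟨t, ht⟩ := hp.1 i
      exact ⟨t.castSucc, by simpa [Fin.snoc_castSucc] using ht⟩
    · intro i
      obtain ⟨t, ht⟩ := hp.1 i
      exact ⟨t, by simpa [Fin.snoc_castSucc] using ht⟩
  · intro g' hg'
    rw [Finset.mem_filter] at hg'
    rw [Finset.mem_product, mem_surjs]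
    exact ⟨hg'.2, Finset.mem_univ _⟩
  · rintro ⟨g, j⟩ _
    simp [Fin.init_snoc, Fin.snoc_castSucc, Fin.snoc_last]
  · intro g' _
    exact Fin.snoc_init_self g'
  · rintro ⟨g, j⟩ _
    rfl

lemma Tg_caseB (ω ξ φ : X → ℝ) {n k : ℕ} (g : Fin n → Fin k) (i₀ : Fin (k+1)) :
    Tg ω ξ φ (Fin.snoc (fun t => i₀.succAbove (g t)) i₀ : Fin (n+1) → Fin (k+1))
      = (∑ z, ω z * ξ z * φ z) * Tg ω ξ φ g := by
  rw [Tg, ← (Fin.insertNthEquiv (fun _ => X) i₀).sum_comp, Fintype.sum_prod_type]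
  have hpt : ∀ (z : X) (y : Fin k → X),
      ∏ i, (ω ((Fin.insertNthEquiv (fun _ => X) i₀) (z, y) i) *
          ξ ((Fin.insertNthEquiv (fun _ => X) i₀) (z, y) i) ^
            fiberCard (Fin.snoc (fun t => i₀.succAbove (g t)) i₀ : Fin (n+1) → Fin (k+1)) i *
          φ ((Fin.insertNthEquiv (fun _ => X) i₀) (z, y) i))
      = (ω z * ξ z * φ z) * ∏ j, (ω (y j) * ξ (y j) ^ fiberCard g j * φ (y j)) := by
    intro z y
    rw [Fin.prod_univ_succAbove _ i₀]
    simp only [Fin.insertNthEquiv, Equiv.coe_fn_mk, Fin.insertNth_apply_same,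
      Fin.insertNth_apply_succAbove, fiberCard_caseB_pivot, fiberCard_caseB_other, pow_one]
  simp only [hpt]
  rw [← Finset.sum_mul_sum, Tg]

/-- Case B: surjections of `Fin (n+1)` whose restriction to `Fin n` misses one value. -/
lemma SB_eq (ω ξ φ : X → ℝ) {n k : ℕ} :
    ∑ g' ∈ (surjs (n+1) (k+1)).filter
        (fun g' => ¬ Function.Surjective (fun t : Fin n => g' t.castSucc)),
      Tg ω ξ φ g'
    = (k+1 : ℝ) * ((∑ z, ω z * ξ z * φ z) * ∑ g ∈ surjs n k, Tg ω ξ φ g) := by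
  have hbij : ∑ p ∈ (Finset.univ : Finset (Fin (k+1))) ×ˢ surjs n k,
      ((∑ z, ω z * ξ z * φ z) * Tg ω ξ φ p.2)
      = ∑ g' ∈ (surjs (n+1) (k+1)).filter
          (fun g' => ¬ Function.Surjective (fun t : Fin n => g' t.castSucc)),
        Tg ω ξ φ g' := by
    refine Finset.sum_bij
      (fun p _ => (Fin.snoc (fun t => p.1.succAbove (p.2 t)) p.1 : Fin (n+1) → Fin (k+1)))
      ?_ ?_ ?_ ?_
    · rintro ⟨i₀, g⟩ hp
      rw [Finset.mem_product, mem_surjs] at hp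
      rw [Finset.mem_filter, mem_surjs]
      constructor
      · intro i
        rcases eq_or_ne i i₀ with rfl | hne
        · exact ⟨Fin.last n, by simp [Fin.snoc_last]⟩
        · obtain ⟨j, hj⟩ := Fin.exists_succAbove_eq hne
          obtain ⟨t, ht⟩ := hp.2 j
          refine ⟨t.castSucc, ?_⟩
          simp only [Fin.snoc_castSucc]
          rw [show g t = j from ht, hj]
      · intro hs
        obtain ⟨t, ht⟩ := hs i₀
        simp only [Fin.snoc_castSucc] at ht
        exact Fin.succAbove_ne i₀ (g t) ht
    · rintro ⟨i₀, g⟩ _ ⟨i₁, g₁⟩ _ h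
      have h1 : i₀ = i₁ := by
        have := congrFun h (Fin.last n); simpa [Fin.snoc_last] using this
      subst h1
      have h2 : g = g₁ := by
        funext t
        have := congrFun h t.castSucc
        simp only [Fin.snoc_castSucc] at this
        exact Fin.succAbove_right_injective this
      rw [h2]
    · intro g' hg'
      rw [Finset.mem_filter, mem_surjs] at hg'
      obtain ⟨hsurj, hns⟩ := hg'
      rw [Function.Surjective] at hns; push_neg at hns
      obtain ⟨i₀, hi₀⟩ := hns
      have hlast : g' (Fin.last n) = i₀ := by
        obtain ⟨s, hs⟩ := hsurj i₀
        rcases Fin.eq_castSucc_or_eq_last s with ⟨t, rfl⟩ | rfl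
        · exact absurd hs (hi₀ t)
        · exact hs
      choose G hG using fun t => Fin.exists_succAbove_eq (hi₀ t)
      refine ⟨(i₀, G), ?_, ?_⟩
      · rw [Finset.mem_product, mem_surjs]
        refine ⟨Finset.mem_univ _, fun j => ?_⟩
        obtain ⟨s, hs⟩ := hsurj (i₀.succAbove j)
        rcases Fin.eq_castSucc_or_eq_last s with ⟨t, rfl⟩ | rfl
        · exact ⟨t, Fin.succAbove_right_injective (by rw [hG t, hs])⟩
        · exact absurd (hlast.symm.trans hs).symm (Fin.succAbove_ne i₀ j)
      · funext s
        rcases Fin.eq_castSucc_or_eq_last s with ⟨t, rfl⟩ | rfl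
        · simp [Fin.snoc_castSucc, hG t]
        · simp [Fin.snoc_last, hlast]
    · rintro ⟨i₀, g⟩ _
      exact (Tg_caseB ω ξ φ g i₀).symm
  rw [← hbij, Finset.sum_product]
  simp only [Finset.sum_const, Finset.card_univ, Fintype.card_fin, nsmul_eq_mul]
  push_cast [Finset.mul_sum]
  ring

end Aux

section Aux2

variable {X : Type*} [Fintype X] [DecidableEq X]

set_option linter.unusedSectionVars false

lemma comb (ξ φ ω : X → ℝ) {n : ℕ} (hn : 1 ≤ n) :
    Qf ξ φ ω (n+1)
      = (∑ k ∈ Icc 1 n,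
            (∑ g ∈ surjs n k, ∑ j : Fin k, Tg ω ξ φ (Fin.snoc g j)) / (k.factorial : ℝ))
        + (∑ z, ω z * ξ z * φ z) * Qf ξ φ ω n := by
  rw [Qf]
  have hsplit : ∀ k, ∑ g' ∈ surjs (n+1) k, Tg ω ξ φ g'
      = (∑ g' ∈ (surjs (n+1) k).filter
            (fun g' => Function.Surjective (fun t : Fin n => g' t.castSucc)), Tg ω ξ φ g')
        + ∑ g' ∈ (surjs (n+1) k).filter
            (fun g' => ¬ Function.Surjective (fun t : Fin n => g' t.castSucc)), Tg ω ξ φ g' :=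
    fun k => (Finset.sum_filter_add_sum_filter_not _ _ _).symm
  simp only [hsplit, add_div]
  rw [Finset.sum_add_distrib]
  congr 1
  · rw [Finset.sum_Icc_succ_top (by omega : 1 ≤ n+1)]
    have hz : (surjs (n+1) (n+1)).filter
        (fun g' => Function.Surjective (fun t : Fin n => g' t.castSucc)) = ∅ := by
      rw [Finset.filter_eq_empty_iff]
      intro g' _ hs
      have := Fintype.card_le_of_surjective _ hs
      simp at this
    rw [hz]
    simp only [Finset.sum_empty, zero_div, add_zero]
    exact Finset.sum_congr rfl fun k _ => by rw [SA_eq]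
  · have h1 : Icc 1 (n+1) = insert 1 (Icc 2 (n+1)) := by
      ext m
      simp only [Finset.mem_Icc, Finset.mem_insert]
      omega
    rw [h1, Finset.sum_insert (by simp)]
    have hz1 : (surjs (n+1) 1).filter
        (fun g' => ¬ Function.Surjective (fun t : Fin n => g' t.castSucc)) = ∅ := by
      rw [Finset.filter_eq_empty_iff]
      intro g' _
      simp only [not_not]
      intro i
      have hne : Nonempty (Fin n) := Fin.pos_iff_nonempty.mp (by omega)
      obtain ⟨t⟩ := hne
      exact ⟨t, Subsingleton.elim _ _⟩
    rw [hz1]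
    simp only [Finset.sum_empty, zero_div, zero_add]
    conv_rhs => rw [Qf]
    rw [Finset.mul_sum]
    refine Finset.sum_nbij' (i := fun k => k - 1) (j := fun k => k + 1) ?_ ?_ ?_ ?_ ?_
    · intro k hk; simp only [Finset.mem_Icc] at *; omega
    · intro k hk; simp only [Finset.mem_Icc] at *; omega
    · intro k hk; simp only [Finset.mem_Icc] at hk; show k - 1 + 1 = k; omega
    · intro k hk; simp only [Finset.mem_Icc] at hk; show k + 1 - 1 = k; omega
    · intro k hk
      simp only [Finset.mem_Icc] at hk
      obtain ⟨m, rfl⟩ : ∃ m, k = m + 2 := ⟨k - 2, by omega⟩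
      beta_reduce
      rw [SB_eq]
      have hfac : ((m+2 : ℕ).factorial : ℝ) = (m+2 : ℝ) * ((m+1 : ℕ).factorial : ℝ) := by
        rw [show (m+2 : ℕ) = (m+1)+1 from rfl, Nat.factorial_succ]
        push_cast
        ring
      have h2 : ((m+1 : ℕ).factorial : ℝ) ≠ 0 := Nat.cast_ne_zero.mpr (Nat.factorial_ne_zero _)
      have h3 : (m+2 : ℝ) ≠ 0 := by positivity
      rw [show (m + 2 - 1 : ℕ) = m + 1 from rfl, hfac]
      field_simp
      push_cast
      ring
lemma step_lemma (ξ φ : X → ℝ) {n : ℕ} (hn : 1 ≤ n) (ω : X → ℝ) :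
    measDirDeriv ξ (fun η => Qf ξ φ η n * Real.exp (∑ x, η x * φ x)) ω
      = Qf ξ φ ω (n+1) * Real.exp (∑ x, ω x * φ x) := by
  simp only [measDirDeriv]
  simp only [key_deriv]
  rw [comb ξ φ ω hn, ← sumx ξ φ ω n, add_mul, Finset.sum_mul, Finset.sum_mul, Finset.sum_mul,
    ← Finset.sum_add_distrib]
  refine Finset.sum_congr rfl fun x _ => ?_
  ring

end Aux2

/-- applying `⟨ω,ξ∂⟩` `n` times to `e^{⟨ω,φ⟩}` gives
`(Σ_{k=1}^{n} ⟨ω^{⊗k}, (S(n,k)ξ^{⊗n})·φ^{⊗k}⟩)·e^{⟨ω,φ⟩}`. -/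
theorem gruenert_exponential
    {X : Type*} [Fintype X] [DecidableEq X] (ξ φ : X → ℝ) {n : ℕ} (hn : 1 ≤ n)
    (ω : X → ℝ) :
    (measDirDeriv ξ)^[n] (fun η => Real.exp (∑ x, η x * φ x)) ω
      = (∑ k ∈ Finset.Icc 1 n,
            pairing k (prodMeas ω k)
              (fun y => Sop n k (fun v : Fin n → X => ∏ t, ξ (v t)) y * ∏ t, φ (y t)))
          * Real.exp (∑ x, ω x * φ x) := by
  rw [rhs_eq]
  induction n, hn using Nat.le_induction generalizing ω with
  | base =>
    rw [Function.iterate_one]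
    exact base_case ξ φ ω
  | succ n hn ih =>
    rw [Function.iterate_succ_apply']
    rw [show (measDirDeriv ξ)^[n] (fun η => Real.exp (∑ x, η x * φ x))
        = fun η => Qf ξ φ η n * Real.exp (∑ x, η x * φ x) from funext fun η => ih η]
    exact step_lemma ξ φ hn ω
end
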